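/- arXiv:2111.02753 — 4 statements merged into one kernel-verified Lean document; each statement's English description precedes it below -/
import Mathlib

section
/- Let N ≥ 1 and α > 0, and let u₀ ∈ L¹(ℝ^N) ∩ L²(ℝ^N). Define the Fourier transform û₀(ω) = (2π)^{-N/2} ∫_{ℝ^N} u₀(x) e^{-i ω·x} dx, the solution u(t,x) = (2π)^{-N/2} ∫_{ℝ^N} e^{-t|ω|^{2α}} û₀(ω) e^{i ω·x} dω for t > 0, and the rescaling factors c_t = (2π)^N t^{N/(2α)} / M_α where M_α = ∫_{ℝ^N} e^{-|s|^{2α}} ds. Then for every compact set K ⊆ ℝ^N, c_t u(t,x) converges to ∫_{ℝ^N} u₀(y) dy as t → ∞, uniformly with respect to x ∈ K. -/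
open MeasureTheory Filter Real Complex

lemma psi_bounded {p q : ℝ} (hp : 0 < p) (hq : 0 ≤ q) :
    ∃ C : ℝ, 0 ≤ C ∧ ∀ s : ℝ, 0 ≤ s → (1 + s) ^ q * Real.exp (-s ^ p) ≤ C := by
  set ψ : ℝ → ℝ := fun s => (1 + s) ^ q * Real.exp (-s ^ p) with hψ
  have hcont : ContinuousOn ψ (Set.Ici 0) := by
    apply ContinuousOn.mul
    · apply ContinuousOn.rpow_const (by fun_prop)
      intro s hs
      have h0 : (0:ℝ) ≤ s := hs
      left; positivity
    · apply Continuous.continuousOn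
      apply Real.continuous_exp.comp
      apply Continuous.neg
      exact continuous_id.rpow_const (fun x => Or.inr hp.le)
  have htend : Tendsto ψ atTop (nhds 0) := by
    have h1 : Tendsto (fun u : ℝ => u ^ (q / p) * Real.exp (-1 * u)) atTop (nhds 0) :=
      tendsto_rpow_mul_exp_neg_mul_atTop_nhds_zero (q/p) 1 one_pos
    have h2 : Tendsto (fun s : ℝ => s ^ p) atTop atTop := tendsto_rpow_atTop hp
    have h3 : Tendsto (fun s : ℝ => (s ^ p) ^ (q/p) * Real.exp (-1 * s ^ p)) atTop (nhds 0) :=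
      h1.comp h2
    have h4 : Tendsto (fun s : ℝ => (2:ℝ) ^ q * (s ^ q * Real.exp (-s ^ p))) atTop (nhds 0) := by
      have h5 : Tendsto (fun s : ℝ => s ^ q * Real.exp (-s ^ p)) atTop (nhds 0) := by
        apply h3.congr'
        filter_upwards [eventually_gt_atTop 0] with s hs
        rw [← Real.rpow_mul hs.le, mul_comm p (q/p), div_mul_cancel₀ q hp.ne', neg_one_mul]
      simpa using h5.const_mul ((2:ℝ) ^ q)
    apply squeeze_zero' (g := fun s => (2:ℝ) ^ q * (s ^ q * Real.exp (-s ^ p)))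
    · filter_upwards [eventually_ge_atTop 0] with s hs
      positivity
    · filter_upwards [eventually_ge_atTop 1] with s hs
      have hs0 : (0:ℝ) < s := by linarith
      have h1s : (1:ℝ) + s ≤ 2 * s := by linarith
      have hle : (1 + s) ^ q ≤ (2 * s) ^ q :=
        Real.rpow_le_rpow (by linarith) h1s hq
      calc (1 + s) ^ q * Real.exp (-s ^ p) ≤ (2 * s) ^ q * Real.exp (-s ^ p) := by
            apply mul_le_mul_of_nonneg_right hle (Real.exp_nonneg _)
        _ = 2 ^ q * (s ^ q * Real.exp (-s ^ p)) := by
            rw [Real.mul_rpow (by norm_num) hs0.le]; ring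
    · exact h4
  -- bounded on [0, T] by compactness, ≤ 1 beyond T
  obtain ⟨T, hT⟩ := (htend.eventually (eventually_le_nhds (by norm_num : (0:ℝ) < 1))).exists_forall_of_atTop
  obtain ⟨C, hC⟩ := (isCompact_Icc (a := (0:ℝ)) (b := max T 0)).exists_bound_of_continuousOn
    (hcont.mono (fun x hx => hx.1))
  refine ⟨max C 1, le_trans (by norm_num) (le_max_right _ _), fun s hs => ?_⟩
  rcases le_or_gt s (max T 0) with h | h
  · exact le_trans (le_trans (le_abs_self _) (hC s ⟨hs, h⟩)) (le_max_left _ _)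
  · exact le_trans (hT s (le_of_lt (lt_of_le_of_lt (le_max_left _ _) h))) (le_max_right _ _)

lemma int_master (N : ℕ) {p : ℝ} (hp : 0 < p) :
    Integrable (fun x : EuclideanSpace ℝ (Fin N) => (1 + ‖x‖) * Real.exp (-‖x‖ ^ p)) := by
  obtain ⟨C, hC0, hC⟩ := psi_bounded hp (q := (N:ℝ)+2) (by positivity)
  have hnr : (Module.finrank ℝ (EuclideanSpace ℝ (Fin N)) : ℝ) < (N:ℝ)+1 := by
    simp [finrank_euclideanSpace_fin]
  have hcont : Continuous (fun x : EuclideanSpace ℝ (Fin N) => (1 + ‖x‖) * Real.exp (-‖x‖ ^ p)) := by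
    apply Continuous.mul (by fun_prop)
    exact Real.continuous_exp.comp (Continuous.neg (continuous_norm.rpow_const (fun x => Or.inr hp.le)))
  apply Integrable.mono' ((integrable_one_add_norm hnr).const_mul C) hcont.aestronglyMeasurable
  filter_upwards with x
  set s := ‖x‖ with hs
  have hs0 : (0:ℝ) ≤ s := norm_nonneg _
  have h1s : (0:ℝ) < 1 + s := by linarith
  have key := hC s hs0
  have hnorm : ‖(1 + s) * Real.exp (-s ^ p)‖ = (1 + s) * Real.exp (-s ^ p) := by
    rw [Real.norm_eq_abs, _root_.abs_of_nonneg (by positivity)]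
  rw [hnorm, Real.rpow_neg h1s.le, mul_comm C, ← div_eq_inv_mul, le_div_iff₀ (by positivity)]
  calc (1 + s) * Real.exp (-s ^ p) * (1 + s) ^ ((N:ℝ)+1)
      = (1 + s) ^ ((N:ℝ)+2) * Real.exp (-s ^ p) := by
        rw [show ((N:ℝ)+2) = ((N:ℝ)+1)+1 by ring, Real.rpow_add h1s ((N:ℝ)+1) 1, Real.rpow_one]; ring
    _ ≤ C := key

lemma w_cont (N : ℕ) {p : ℝ} (hp : 0 < p) :
    Continuous (fun x : EuclideanSpace ℝ (Fin N) => Real.exp (-‖x‖ ^ p)) :=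
  Real.continuous_exp.comp (Continuous.neg (continuous_norm.rpow_const (fun _ => Or.inr hp.le)))

lemma int_w (N : ℕ) {p : ℝ} (hp : 0 < p) :
    Integrable (fun x : EuclideanSpace ℝ (Fin N) => Real.exp (-‖x‖ ^ p)) := by
  apply (int_master N hp).mono' (w_cont N hp).aestronglyMeasurable
  filter_upwards with x
  rw [Real.norm_eq_abs, _root_.abs_of_nonneg (Real.exp_nonneg _)]
  nlinarith [Real.exp_nonneg (-‖x‖ ^ p), norm_nonneg x]

lemma int_w1 (N : ℕ) {p : ℝ} (hp : 0 < p) :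
    Integrable (fun x : EuclideanSpace ℝ (Fin N) => Real.exp (-‖x‖ ^ p) * ‖x‖) := by
  apply (int_master N hp).mono' (((w_cont N hp).mul continuous_norm).aestronglyMeasurable)
  filter_upwards with x
  simp only [Pi.mul_apply]
  rw [Real.norm_eq_abs, _root_.abs_of_nonneg (by positivity)]
  nlinarith [Real.exp_nonneg (-‖x‖ ^ p), norm_nonneg x]

lemma M_pos (N : ℕ) {p : ℝ} (hp : 0 < p) :
    0 < ∫ s : EuclideanSpace ℝ (Fin N), Real.exp (-‖s‖ ^ p) := by
  rw [integral_pos_iff_support_of_nonneg (fun x => Real.exp_nonneg _) (int_w N hp)]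
  have : (Function.support fun x : EuclideanSpace ℝ (Fin N) => Real.exp (-‖x‖ ^ p)) = Set.univ := by
    ext x; simp [Function.mem_support, (Real.exp_pos _).ne']
  rw [this]
  exact MeasureTheory.Measure.measure_univ_pos.mpr (NeZero.ne _)

lemma exp_I_sub_one_le (θ : ℝ) : ‖Complex.exp (Complex.I * θ) - 1‖ ≤ 2 * |θ| := by
  rcases le_or_gt (|θ|) 1 with h | h
  · have := Complex.norm_exp_sub_one_le (x := Complex.I * θ) (by simpa using h)
    simpa using this
  · have h1 : ‖Complex.exp (Complex.I * θ)‖ = 1 := by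
      rw [mul_comm]
      simpa using Complex.norm_exp_ofReal_mul_I θ
    calc ‖Complex.exp (Complex.I * θ) - 1‖ ≤ ‖Complex.exp (Complex.I * θ)‖ + ‖(1:ℂ)‖ :=
          norm_sub_le _ _
      _ = 2 := by rw [h1]; norm_num
      _ ≤ 2 * |θ| := by nlinarith

lemma norm_exp_I_mul (r : ℝ) : ‖Complex.exp (Complex.I * r)‖ = 1 := by
  simp [Complex.norm_exp, Complex.mul_re]

lemma norm_exp_neg_I_mul (r : ℝ) : ‖Complex.exp (-(Complex.I * r))‖ = 1 := by
  simp [Complex.norm_exp, Complex.mul_re]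

section Fhat
variable {N : ℕ} {u₀ : EuclideanSpace ℝ (Fin N) → ℂ}

lemma F_cont (h1 : Integrable u₀) :
    Continuous fun ω : EuclideanSpace ℝ (Fin N) =>
      ∫ x, u₀ x * Complex.exp (-(Complex.I * ((inner ℝ ω x : ℝ) : ℂ))) := by
  apply continuous_of_dominated (bound := fun x => ‖u₀ x‖)
  · intro ω
    apply h1.aestronglyMeasurable.mul
    apply Continuous.aestronglyMeasurable
    exact Complex.continuous_exp.comp (continuous_const.mul (Complex.continuous_ofReal.comp
      ((continuous_const (y := ω)).inner continuous_id))).neg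
  · intro ω
    filter_upwards with x
    rw [norm_mul, norm_exp_neg_I_mul, mul_one]
  · exact h1.norm
  · filter_upwards with x
    exact continuous_const.mul (Complex.continuous_exp.comp (continuous_const.mul
      (Complex.continuous_ofReal.comp (continuous_id.inner (continuous_const (y := x))))).neg)

lemma F_bound (ω : EuclideanSpace ℝ (Fin N)) :
    ‖∫ x, u₀ x * Complex.exp (-(Complex.I * ((inner ℝ ω x : ℝ) : ℂ)))‖ ≤ ∫ x, ‖u₀ x‖ := by
  refine le_trans (norm_integral_le_integral_norm _) (le_of_eq ?_)
  congr 1; ext x; rw [norm_mul, norm_exp_neg_I_mul, mul_one]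

end Fhat

/-- **Local asymptotic behaviour of the fractional/polyharmonic heat equation on ℝ^N.**
For `u₀ ∈ L¹ ∩ L²(ℝ^N)`, the rescaled solution `c_t u(t,·)` of
`∂u/∂t + (-Δ)^α u = 0` converges, uniformly on every compact set `K`,
to the constant `∫ u₀`. -/
theorem fractional_heat_local_asymptotics
    (N : ℕ) (hN : 1 ≤ N) (α : ℝ) (hα : 0 < α)
    (u₀ : EuclideanSpace ℝ (Fin N) → ℂ)
    (hu₀L1 : Integrable u₀)
    (hu₀L2 : MemLp u₀ 2)
    (u0hat : EuclideanSpace ℝ (Fin N) → ℂ)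
    (hu0hat : ∀ ω, u0hat ω
      = (((2 * π) ^ (-(N : ℝ) / 2) : ℝ) : ℂ)
        * ∫ x, u₀ x * Complex.exp (-(Complex.I * ((inner ℝ ω x : ℝ) : ℂ))))
    (u : ℝ → EuclideanSpace ℝ (Fin N) → ℂ)
    (hu : ∀ t, 0 < t → ∀ x, u t x
      = (((2 * π) ^ (-(N : ℝ) / 2) : ℝ) : ℂ)
        * ∫ ω, (Real.exp (-(t * ‖ω‖ ^ (2 * α))) : ℂ) * u0hat ω
            * Complex.exp (Complex.I * ((inner ℝ ω x : ℝ) : ℂ)))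
    (M : ℝ) (hM : M = ∫ s : EuclideanSpace ℝ (Fin N), Real.exp (-‖s‖ ^ (2 * α)))
    (c : ℝ → ℝ) (hc : ∀ t, c t = (2 * π) ^ (N : ℕ) * t ^ ((N : ℝ) / (2 * α)) / M)
    (K : Set (EuclideanSpace ℝ (Fin N))) (hK : IsCompact K) :
    TendstoUniformlyOn (fun t x => (c t : ℂ) * u t x)
      (fun _ => ∫ y, u₀ y) atTop K := by
  set p : ℝ := 2 * α with hpdef
  have hp : 0 < p := by positivity
  have h2π : (0:ℝ) < 2 * π := by positivity
  set ε : ℝ → ℝ := fun t => t ^ (-(1/p)) with hεdef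
  set w : EuclideanSpace ℝ (Fin N) → ℝ := fun s => Real.exp (-‖s‖ ^ p) with hwdef
  have hMpos : 0 < M := hM ▸ M_pos N hp
  set P : ℝ := (2 * π) ^ ((N:ℝ)/2) / M with hPdef
  have hP0 : 0 < P := by positivity
  -- the key change-of-variables identity
  have key : ∀ t, 0 < t → ∀ x, (c t : ℂ) * u t x
      = (P : ℂ) * ∫ s, ((w s : ℝ) : ℂ) * u0hat (ε t • s)
          * Complex.exp (Complex.I * ((inner ℝ (ε t • s) x : ℝ) : ℂ)) := by
    intro t ht x
    have hε : 0 < ε t := Real.rpow_pos_of_pos ht _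
    set f : EuclideanSpace ℝ (Fin N) → ℂ := fun ω => (Real.exp (-(t * ‖ω‖ ^ p)) : ℂ) * u0hat ω
        * Complex.exp (Complex.I * ((inner ℝ ω x : ℝ) : ℂ)) with hfdef
    have h1 := MeasureTheory.Measure.integral_comp_smul_of_nonneg (volume) f (ε t) (hR := hε.le)
    rw [finrank_euclideanSpace_fin] at h1
    have h2 : (∫ ω, f ω) = (((ε t)^(N:ℕ) : ℝ) : ℂ) * ∫ s, f (ε t • s) := by
      rw [h1, Complex.real_smul, ← mul_assoc, ← Complex.ofReal_mul,
        mul_inv_cancel₀ (pow_ne_zero _ hε.ne'), Complex.ofReal_one, one_mul]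
    have h3 : (fun s : EuclideanSpace ℝ (Fin N) => f (ε t • s)) = fun s => ((w s : ℝ) : ℂ) * u0hat (ε t • s)
          * Complex.exp (Complex.I * ((inner ℝ (ε t • s) x : ℝ) : ℂ)) := by
      funext s
      have hn : ‖ε t • s‖ = ε t * ‖s‖ := by
        rw [norm_smul, Real.norm_eq_abs, _root_.abs_of_pos hε]
      have hεp : (ε t) ^ p = t⁻¹ := by
        rw [hεdef, ← Real.rpow_mul ht.le]
        rw [show -(1/p) * p = -1 by field_simp, Real.rpow_neg_one]
      have harg : t * ‖ε t • s‖ ^ p = ‖s‖ ^ p := by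
        rw [hn, Real.mul_rpow hε.le (norm_nonneg s), hεp]
        field_simp
      simp only [hfdef, harg, hwdef]
    have hcoef : c t * ((2*π) ^ (-(N:ℝ)/2)) * (ε t)^(N:ℕ) = P := by
      have hA : ((2*π:ℝ)) ^ (N:ℕ) * (2*π) ^ (-(N:ℝ)/2) = (2*π) ^ ((N:ℝ)/2) := by
        rw [← Real.rpow_natCast (2*π) N, ← Real.rpow_add h2π]
        congr 1; ring
      have hB : t ^ ((N:ℝ)/p) * (ε t)^(N:ℕ) = 1 := by
        rw [hεdef, ← Real.rpow_natCast (t ^ (-(1/p))) N, ← Real.rpow_mul ht.le,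
          ← Real.rpow_add ht]
        rw [show (N:ℝ)/p + -(1/p) * (N:ℕ) = 0 by field_simp; ring]
        exact Real.rpow_zero t
      rw [hc t, hPdef]
      have hre : (2*π) ^ (N:ℕ) * t^((N:ℝ)/p) / M * ((2*π) ^ (-(N:ℝ)/2)) * (ε t)^(N:ℕ)
          = ((2*π) ^ (N:ℕ) * (2*π) ^ (-(N:ℝ)/2)) * (t^((N:ℝ)/p) * (ε t)^(N:ℕ)) / M := by
        ring
      rw [hre, hA, hB, mul_one]
    calc (c t : ℂ) * u t x
        = (c t : ℂ) * ((((2 * π) ^ (-(N : ℝ) / 2) : ℝ) : ℂ) * ∫ ω, f ω) := by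
          rw [hu t ht x]
      _ = ((c t * ((2*π) ^ (-(N:ℝ)/2)) * (ε t)^(N:ℕ) : ℝ) : ℂ) * ∫ s, f (ε t • s) := by
          rw [h2]; push_cast; ring
      _ = (P : ℂ) * ∫ s, ((w s : ℝ) : ℂ) * u0hat (ε t • s)
          * Complex.exp (Complex.I * ((inner ℝ (ε t • s) x : ℝ) : ℂ)) := by
          rw [hcoef, h3]
  -- properties of u0hat
  have hu0c : Continuous u0hat := by
    have he : u0hat = fun ω => (((2 * π) ^ (-(N : ℝ) / 2) : ℝ) : ℂ)
        * ∫ x, u₀ x * Complex.exp (-(Complex.I * ((inner ℝ ω x : ℝ) : ℂ))) := funext hu0hat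
    rw [he]; exact continuous_const.mul (F_cont hu₀L1)
  set Cb : ℝ := ((2 * π) ^ (-(N:ℝ)/2)) * ∫ x, ‖u₀ x‖ with hCbdef
  have hCb0 : 0 ≤ Cb :=
    mul_nonneg (Real.rpow_pos_of_pos h2π _).le (integral_nonneg (fun x => norm_nonneg _))
  have hCb : ∀ ω, ‖u0hat ω‖ ≤ Cb := by
    intro ω
    rw [hu0hat ω, norm_mul, Complex.norm_real, Real.norm_eq_abs,
      _root_.abs_of_pos (Real.rpow_pos_of_pos h2π _)]
    exact mul_le_mul_of_nonneg_left (F_bound ω) (Real.rpow_pos_of_pos h2π _).le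
  have hu0hat0 : u0hat 0 = (((2 * π) ^ (-(N:ℝ)/2) : ℝ) : ℂ) * ∫ y, u₀ y := by
    rw [hu0hat 0]
    congr 1
    apply integral_congr_ae
    filter_upwards with x
    simp [inner_zero_left]
  -- integrability facts
  have hwint := int_w N hp
  have hw1int := int_w1 N hp
  have hwc := w_cont N hp
  set B : ℝ := ∫ s : EuclideanSpace ℝ (Fin N), w s * ‖s‖ with hBdef
  -- bound for K
  obtain ⟨R₀, hR₀⟩ := hK.isBounded.subset_closedBall 0
  set R := max R₀ 0 with hRdef
  have hR : ∀ x ∈ K, ‖x‖ ≤ R := by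
    intro x hx
    have := hR₀ hx
    rw [Metric.mem_closedBall, dist_zero_right] at this
    exact le_trans this (le_max_left _ _)
  have hR0 : (0:ℝ) ≤ R := le_max_right _ _
  -- continuity and integrability of the rescaled integrand
  have hgcont : ∀ (e : ℝ) (x : EuclideanSpace ℝ (Fin N)),
      Continuous (fun s : EuclideanSpace ℝ (Fin N) => ((w s : ℝ) : ℂ) * u0hat (e • s)
        * Complex.exp (Complex.I * ((inner ℝ (e • s) x : ℝ) : ℂ))) := by
    intro e x
    have hsm : Continuous (fun s : EuclideanSpace ℝ (Fin N) => e • s) :=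
      continuous_id.const_smul e
    apply Continuous.mul
    · exact (Complex.continuous_ofReal.comp hwc).mul (hu0c.comp hsm)
    · exact Complex.continuous_exp.comp (continuous_const.mul
        (Complex.continuous_ofReal.comp ((hsm.inner (continuous_const (y := x))))))
  have hgint : ∀ (e : ℝ) (x : EuclideanSpace ℝ (Fin N)),
      Integrable (fun s : EuclideanSpace ℝ (Fin N) => ((w s : ℝ) : ℂ) * u0hat (e • s)
        * Complex.exp (Complex.I * ((inner ℝ (e • s) x : ℝ) : ℂ))) := by
    intro e x
    apply (hwint.const_mul Cb).mono' (hgcont e x).aestronglyMeasurable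
    filter_upwards with s
    rw [norm_mul, norm_mul, norm_exp_I_mul, mul_one, Complex.norm_real, Real.norm_eq_abs,
      _root_.abs_of_nonneg (Real.exp_nonneg _)]
    exact mul_le_mul_of_nonneg_left (hCb _) (Real.exp_nonneg _) |>.trans
      (le_of_eq (mul_comm _ _))
  have hhint : Integrable (fun s : EuclideanSpace ℝ (Fin N) => ((w s : ℝ) : ℂ) * u0hat 0) :=
    hwint.ofReal.mul_const _
  -- the A-family and its integrability
  set A : ℝ → ℝ := fun t => ∫ s : EuclideanSpace ℝ (Fin N),
      w s * ‖u0hat (ε t • s) - u0hat 0‖ with hAdef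
  have hAint : ∀ e : ℝ, Integrable (fun s : EuclideanSpace ℝ (Fin N) =>
      w s * ‖u0hat (e • s) - u0hat 0‖) := by
    intro e
    apply (hwint.const_mul (2*Cb)).mono'
    · exact (hwc.mul (((hu0c.comp (continuous_id.const_smul e)).sub
        continuous_const).norm)).aestronglyMeasurable
    · filter_upwards with s
      rw [Real.norm_eq_abs, _root_.abs_of_nonneg (mul_nonneg (Real.exp_nonneg _) (norm_nonneg _))]
      have h1 : ‖u0hat (e • s) - u0hat 0‖ ≤ 2 * Cb := by
        refine le_trans (norm_sub_le _ _) ?_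
        have := hCb (e • s); have := hCb 0; linarith
      calc w s * ‖u0hat (e • s) - u0hat 0‖ ≤ w s * (2 * Cb) :=
            mul_le_mul_of_nonneg_left h1 (Real.exp_nonneg _)
        _ = 2 * Cb * w s := by ring
  -- value of the constant
  have hMh : (∫ s : EuclideanSpace ℝ (Fin N), ((w s : ℝ) : ℂ) * u0hat 0)
      = (M : ℂ) * u0hat 0 := by
    rw [integral_mul_const]
    congr 1
    rw [hM]
    exact integral_ofReal
  have hconstval : (∫ y, u₀ y) = (P : ℂ) * ((M : ℂ) * u0hat 0) := by
    have hone : P * M * ((2*π) ^ (-(N:ℝ)/2)) = 1 := by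
      rw [hPdef, div_mul_cancel₀ _ hMpos.ne', ← Real.rpow_add h2π,
        show (N:ℝ)/2 + -(N:ℝ)/2 = 0 by ring, Real.rpow_zero]
    calc (∫ y, u₀ y) = ((P * M * ((2*π) ^ (-(N:ℝ)/2)) : ℝ) : ℂ) * ∫ y, u₀ y := by
          rw [hone]; simp
      _ = (P : ℂ) * ((M : ℂ) * u0hat 0) := by rw [hu0hat0]; push_cast; ring
  -- the pointwise uniform bound
  have hbound : ∀ t, 0 < t → ∀ x ∈ K,
      ‖(c t : ℂ) * u t x - ∫ y, u₀ y‖ ≤ P * (A t + 2*Cb*R*(ε t)*B) := by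
    intro t ht x hx
    have hε : 0 < ε t := Real.rpow_pos_of_pos ht _
    have hsplit : (c t : ℂ) * u t x - ∫ y, u₀ y
        = (P : ℂ) * ∫ s, (((w s : ℝ) : ℂ) * u0hat (ε t • s)
            * Complex.exp (Complex.I * ((inner ℝ (ε t • s) x : ℝ) : ℂ))
            - ((w s : ℝ) : ℂ) * u0hat 0) := by
      rw [key t ht x, hconstval, integral_sub (hgint (ε t) x) hhint, hMh, mul_sub]
    rw [hsplit, norm_mul, Complex.norm_real, Real.norm_eq_abs, _root_.abs_of_pos hP0]
    apply mul_le_mul_of_nonneg_left _ hP0.le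
    refine le_trans (norm_integral_le_integral_norm _) ?_
    have hptw : ∀ s : EuclideanSpace ℝ (Fin N),
        ‖((w s : ℝ) : ℂ) * u0hat (ε t • s)
            * Complex.exp (Complex.I * ((inner ℝ (ε t • s) x : ℝ) : ℂ))
            - ((w s : ℝ) : ℂ) * u0hat 0‖
        ≤ w s * ‖u0hat (ε t • s) - u0hat 0‖ + (2*Cb*R*(ε t)) * (w s * ‖s‖) := by
      intro s
      set θ : ℝ := (inner ℝ (ε t • s) x : ℝ) with hθdef
      have hw0 : 0 ≤ w s := Real.exp_nonneg _
      have hkey : ((w s : ℝ) : ℂ) * u0hat (ε t • s) * Complex.exp (Complex.I * (θ:ℂ))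
            - ((w s : ℝ) : ℂ) * u0hat 0
          = ((w s : ℝ) : ℂ) * ((u0hat (ε t • s) - u0hat 0) * Complex.exp (Complex.I * (θ:ℂ))
            + u0hat 0 * (Complex.exp (Complex.I * (θ:ℂ)) - 1)) := by ring
      rw [hkey, norm_mul, Complex.norm_real, Real.norm_eq_abs, _root_.abs_of_nonneg hw0]
      have h1 : ‖(u0hat (ε t • s) - u0hat 0) * Complex.exp (Complex.I * (θ:ℂ))
            + u0hat 0 * (Complex.exp (Complex.I * (θ:ℂ)) - 1)‖
          ≤ ‖u0hat (ε t • s) - u0hat 0‖ + Cb * (2 * |θ|) := by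
        refine le_trans (norm_add_le _ _) (add_le_add ?_ ?_)
        · rw [norm_mul, norm_exp_I_mul, mul_one]
        · rw [norm_mul]
          exact mul_le_mul (hCb 0) (exp_I_sub_one_le θ) (norm_nonneg _) hCb0
      have hθle : |θ| ≤ (ε t) * ‖s‖ * R := by
        refine le_trans (abs_real_inner_le_norm _ _) ?_
        rw [norm_smul, Real.norm_eq_abs, _root_.abs_of_pos hε]
        exact mul_le_mul_of_nonneg_left (hR x hx) (by positivity)
      have h2 : Cb * (2 * |θ|) ≤ (2*Cb*R*(ε t)) * ‖s‖ := by
        calc Cb * (2 * |θ|) ≤ Cb * (2 * ((ε t) * ‖s‖ * R)) := by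
              apply mul_le_mul_of_nonneg_left _ hCb0
              linarith
          _ = (2*Cb*R*(ε t)) * ‖s‖ := by ring
      calc w s * ‖(u0hat (ε t • s) - u0hat 0) * Complex.exp (Complex.I * (θ:ℂ))
            + u0hat 0 * (Complex.exp (Complex.I * (θ:ℂ)) - 1)‖
          ≤ w s * (‖u0hat (ε t • s) - u0hat 0‖ + Cb * (2 * |θ|)) :=
            mul_le_mul_of_nonneg_left h1 hw0
        _ ≤ w s * (‖u0hat (ε t • s) - u0hat 0‖ + (2*Cb*R*(ε t)) * ‖s‖) := by
            apply mul_le_mul_of_nonneg_left _ hw0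
            linarith
        _ = w s * ‖u0hat (ε t • s) - u0hat 0‖ + (2*Cb*R*(ε t)) * (w s * ‖s‖) := by ring
    calc (∫ s, ‖((w s : ℝ) : ℂ) * u0hat (ε t • s)
            * Complex.exp (Complex.I * ((inner ℝ (ε t • s) x : ℝ) : ℂ))
            - ((w s : ℝ) : ℂ) * u0hat 0‖)
        ≤ ∫ s : EuclideanSpace ℝ (Fin N), (w s * ‖u0hat (ε t • s) - u0hat 0‖
            + (2*Cb*R*(ε t)) * (w s * ‖s‖)) := by
          apply integral_mono ((hgint (ε t) x).sub hhint).norm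
            ((hAint (ε t)).add ((hw1int).const_mul _))
          exact hptw
      _ = A t + 2*Cb*R*(ε t)*B := by
          rw [integral_add (hAint (ε t)) ((hw1int).const_mul _), integral_const_mul, hBdef]
  -- limits
  have hεlim : Tendsto ε atTop (nhds 0) := tendsto_rpow_neg_atTop (by positivity)
  have hAlim : Tendsto A atTop (nhds 0) := by
    have h0 : (0:ℝ) = ∫ _s : EuclideanSpace ℝ (Fin N), (0:ℝ) := by simp
    rw [hAdef, h0]
    apply tendsto_integral_filter_of_dominated_convergence (fun s => 2 * Cb * w s)
    · filter_upwards with t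
      exact (hwc.mul (((hu0c.comp (continuous_id.const_smul (ε t))).sub
        continuous_const).norm)).aestronglyMeasurable
    · filter_upwards with t
      filter_upwards with s
      rw [Real.norm_eq_abs, _root_.abs_of_nonneg (mul_nonneg (Real.exp_nonneg _) (norm_nonneg _))]
      have h1 : ‖u0hat (ε t • s) - u0hat 0‖ ≤ 2 * Cb := by
        refine le_trans (norm_sub_le _ _) ?_
        have := hCb (ε t • s); have := hCb 0; linarith
      calc w s * ‖u0hat (ε t • s) - u0hat 0‖ ≤ w s * (2 * Cb) :=
            mul_le_mul_of_nonneg_left h1 (Real.exp_nonneg _)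
        _ = 2 * Cb * w s := by ring
    · exact hwint.const_mul _
    · filter_upwards with s
      have hsm : Tendsto (fun t => ε t • s) atTop (nhds (0 : EuclideanSpace ℝ (Fin N))) := by
        have := hεlim.smul_const s
        simpa using this
      have h2 : Tendsto (fun t => u0hat (ε t • s)) atTop (nhds (u0hat 0)) :=
        (hu0c.tendsto 0).comp hsm
      have h3 : Tendsto (fun t => w s * ‖u0hat (ε t • s) - u0hat 0‖) atTop
          (nhds (w s * ‖u0hat 0 - u0hat 0‖)) :=
        ((h2.sub tendsto_const_nhds).norm).const_mul (w s)
      simpa using h3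
  have hφ : Tendsto (fun t => P * (A t + 2*Cb*R*(ε t)*B)) atTop (nhds 0) := by
    have h4 : Tendsto (fun t => 2*Cb*R*(ε t)*B) atTop (nhds 0) := by
      have h5 : Tendsto (fun t => 2*Cb*R*(ε t)*B) atTop (nhds (2*Cb*R*0*B)) :=
        (hεlim.const_mul (2*Cb*R)).mul_const B
      simpa only [mul_zero, zero_mul] using h5
    have := (hAlim.add h4).const_mul P
    simpa using this
  -- conclusion
  rw [Metric.tendstoUniformlyOn_iff]
  intro δ hδ
  filter_upwards [hφ.eventually_lt_const hδ, eventually_gt_atTop 0] with t h1 h2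
  intro x hx
  rw [dist_comm, dist_eq_norm]
  exact lt_of_le_of_lt (hbound t h2 x hx) h1
end

section
/- Let N ≥ 1 and α > 0, and let u₀ ∈ L¹(ℝ^N) ∩ L²(ℝ^N) be real-valued with ∫_{ℝ^N} u₀(x) dx > 0. Define û₀(ω) = (2π)^{-N/2} ∫_{ℝ^N} u₀(x) e^{-i ω·x} dx and u(t,x) = (2π)^{-N/2} ∫_{ℝ^N} e^{-t|ω|^{2α}} û₀(ω) e^{i ω·x} dω for t > 0. Then for every compact set K ⊆ ℝ^N there exists T ≥ 0 (depending on u₀ and K) such that the real part of u(t,x) is strictly positive for all (t,x) ∈ [T,∞) × K. (Since u₀ is real-valued, u(t,x) is real, so this says the solution itself is positive on [T,∞) × K.) -/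
open MeasureTheory Filter Real Complex
open Topology

lemma myNormExpSub (θ : ℝ) : ‖Complex.exp (Complex.I * θ) - 1‖ ≤ |θ| := by
  set z : ℂ := Complex.exp (Complex.I * θ) - 1 with hz
  have h1 : Complex.exp (Complex.I * θ) = (Real.cos θ : ℂ) + (Real.sin θ : ℂ) * Complex.I := by
    rw [mul_comm, Complex.exp_mul_I, Complex.ofReal_cos, Complex.ofReal_sin]
  have hre : z.re = Real.cos θ - 1 := by
    rw [hz, h1]; simp [Complex.add_re, Complex.sub_re, Complex.cos_ofReal_re, Complex.sin_ofReal_re]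
  have him : z.im = Real.sin θ := by
    rw [hz, h1]; simp [Complex.add_im, Complex.sub_im, Complex.cos_ofReal_re, Complex.sin_ofReal_re]
  have hnorm : ‖z‖ ^ 2 = z.re ^ 2 + z.im ^ 2 := by
    rw [Complex.sq_norm, Complex.normSq_apply]; ring
  have h2 : ‖z‖ ^ 2 ≤ |θ| ^ 2 := by
    rw [hnorm, hre, him, _root_.sq_abs]
    have hb := Real.one_sub_sq_div_two_le_cos (x := θ)
    have hs := Real.sin_sq_add_cos_sq θ
    nlinarith
  calc ‖z‖ = Real.sqrt (‖z‖ ^ 2) := (Real.sqrt_sq (norm_nonneg z)).symm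
    _ ≤ Real.sqrt (|θ| ^ 2) := Real.sqrt_le_sqrt h2
    _ = |θ| := Real.sqrt_sq (abs_nonneg θ)

lemma myExpBound (β : ℝ) (hβ : 0 < β) (r : ℝ) (hr : 0 ≤ r) :
    ∃ C : ℝ, 0 ≤ C ∧ ∀ y : ℝ, 0 ≤ y → Real.exp (-(y ^ β)) ≤ C * (1 + y) ^ (-r) := by
  set k : ℕ := ⌈r / β⌉₊ + 1 with hk
  have hk0 : 0 < (k : ℝ) := by positivity
  have hrk : r ≤ β * k := by
    have h1 : r / β ≤ (k : ℝ) := le_trans (Nat.le_ceil _) (by push_cast [hk]; linarith)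
    calc r = β * (r / β) := by field_simp
      _ ≤ β * k := by nlinarith
  refine ⟨2 ^ r * (k : ℝ) ^ k, by positivity, fun y hy => ?_⟩
  have hkk : (1:ℝ) ≤ (k:ℝ) ^ k :=
    one_le_pow₀ (by exact_mod_cast Nat.one_le_iff_ne_zero.mpr (by omega))
  have h2rr : (2:ℝ) ^ r * (2:ℝ) ^ (-r) = 1 := by
    rw [← Real.rpow_add (by norm_num)]; simp
  rcases le_or_gt y 1 with h1 | h1
  · have he : Real.exp (-(y ^ β)) ≤ 1 := by
      rw [← Real.exp_zero]
      exact Real.exp_le_exp.mpr (by simpa using Real.rpow_nonneg hy β)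
    have hb : (2:ℝ) ^ (-r) ≤ (1 + y) ^ (-r) :=
      Real.rpow_le_rpow_of_nonpos (by linarith) (by linarith) (by linarith)
    calc Real.exp (-(y ^ β)) ≤ 1 := he
      _ = 2 ^ r * (2:ℝ) ^ (-r) := h2rr.symm
      _ ≤ 2 ^ r * (1 + y) ^ (-r) :=
          mul_le_mul_of_nonneg_left hb (Real.rpow_nonneg (by norm_num) r)
      _ = 2 ^ r * (1 + y) ^ (-r) * 1 := by ring
      _ ≤ 2 ^ r * (1 + y) ^ (-r) * ((k:ℝ) ^ k) := by
          refine mul_le_mul_of_nonneg_left hkk ?_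
          have := Real.rpow_nonneg (show (0:ℝ) ≤ 1 + y by linarith) (-r)
          positivity
      _ = 2 ^ r * (k:ℝ) ^ k * (1 + y) ^ (-r) := by ring
  · set z : ℝ := y ^ β with hzdef
    have hz1 : 1 ≤ z := Real.one_le_rpow h1.le hβ.le
    have hz0 : 0 < z := by linarith
    have hexp : (z / k) ^ k ≤ Real.exp z := by
      have h1k : z / k + 1 ≤ Real.exp (z / k) := Real.add_one_le_exp _
      calc (z / k) ^ k ≤ (z / k + 1) ^ k := pow_le_pow_left₀ (by positivity) (by linarith) k
        _ ≤ Real.exp (z / k) ^ k := pow_le_pow_left₀ (by positivity) h1k k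
        _ = Real.exp z := by rw [← Real.exp_nat_mul]; congr 1; field_simp
    have hzk : Real.exp (-z) * z ^ k ≤ (k:ℝ) ^ k := by
      rw [Real.exp_neg, inv_mul_le_iff₀ (Real.exp_pos z)]
      have h2 : z ^ k = (k:ℝ) ^ k * (z / k) ^ k := by rw [div_pow]; field_simp
      calc z ^ k = (k:ℝ) ^ k * (z / k) ^ k := h2
        _ ≤ (k:ℝ) ^ k * Real.exp z := mul_le_mul_of_nonneg_left hexp (by positivity)
        _ = Real.exp z * (k:ℝ) ^ k := by ring
    have hexpneg : Real.exp (-z) ≤ (k:ℝ) ^ k * z ^ (-(k:ℝ)) := by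
      rw [Real.rpow_neg hz0.le, Real.rpow_natCast, ← div_eq_mul_inv,
        le_div_iff₀ (pow_pos hz0 k)]
      exact hzk
    have hz_y : z ^ (-(k:ℝ)) = y ^ (-(β * k)) := by
      rw [hzdef, ← Real.rpow_mul hy]
      congr 1; ring
    have hy1 : y ^ (-(β * (k:ℝ))) ≤ y ^ (-r) :=
      Real.rpow_le_rpow_of_exponent_le h1.le (by linarith)
    have hy2 : y ^ (-r) ≤ 2 ^ r * (1 + y) ^ (-r) := by
      have hA : (2 * y) ^ (-r) ≤ (1 + y) ^ (-r) :=
        Real.rpow_le_rpow_of_nonpos (by linarith) (by linarith) (by linarith)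
      have hB : (2 * y) ^ (-r) = 2 ^ (-r) * y ^ (-r) := Real.mul_rpow (by norm_num) hy
      have := mul_le_mul_of_nonneg_left (hB ▸ hA) (Real.rpow_nonneg (show (0:ℝ) ≤ 2 by norm_num) r)
      calc y ^ (-r) = 2 ^ r * (2 ^ (-r) * y ^ (-r)) := by
            rw [← mul_assoc, h2rr, one_mul]
        _ ≤ 2 ^ r * (1 + y) ^ (-r) := this
    calc Real.exp (-(y ^ β)) = Real.exp (-z) := by rw [hzdef]
      _ ≤ (k:ℝ) ^ k * z ^ (-(k:ℝ)) := hexpneg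
      _ = (k:ℝ) ^ k * y ^ (-(β * k)) := by rw [hz_y]
      _ ≤ (k:ℝ) ^ k * y ^ (-r) := mul_le_mul_of_nonneg_left hy1 (by positivity)
      _ ≤ (k:ℝ) ^ k * (2 ^ r * (1 + y) ^ (-r)) := mul_le_mul_of_nonneg_left hy2 (by positivity)
      _ = 2 ^ r * (k:ℝ) ^ k * (1 + y) ^ (-r) := by ring

lemma myIntegrable (N : ℕ) (β : ℝ) (hβ : 0 < β) (m : ℕ) :
    Integrable (fun η : EuclideanSpace ℝ (Fin N) => ‖η‖ ^ m * Real.exp (-(‖η‖ ^ β))) := by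
  obtain ⟨C, hC, hbound⟩ := myExpBound β hβ ((N:ℝ) + 1 + m) (by positivity)
  have hint : Integrable (fun η : EuclideanSpace ℝ (Fin N) => C * (1 + ‖η‖) ^ (-((N:ℝ) + 1))) := by
    refine (integrable_one_add_norm ?_).const_mul C
    rw [finrank_euclideanSpace_fin]
    linarith
  refine hint.mono' ?_ (ae_of_all _ fun η => ?_)
  · apply Continuous.aestronglyMeasurable
    have hc1 : Continuous fun η : EuclideanSpace ℝ (Fin N) => ‖η‖ ^ β :=
      continuous_norm.rpow_const fun x => Or.inr hβ.le
    exact (continuous_norm.pow m).mul (Real.continuous_exp.comp hc1.neg)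
  · have hy : (0:ℝ) ≤ ‖η‖ := norm_nonneg η
    have h1y : (0:ℝ) < 1 + ‖η‖ := by linarith
    rw [Real.norm_of_nonneg (by positivity)]
    calc ‖η‖ ^ m * Real.exp (-(‖η‖ ^ β))
        ≤ (1 + ‖η‖) ^ m * (C * (1 + ‖η‖) ^ (-((N:ℝ) + 1 + m))) := by
          refine mul_le_mul (pow_le_pow_left₀ hy (by linarith) m) (hbound ‖η‖ hy) ?_ ?_
          · positivity
          · positivity
      _ = C * ((1 + ‖η‖) ^ (m:ℝ) * (1 + ‖η‖) ^ (-((N:ℝ) + 1 + m))) := by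
          rw [Real.rpow_natCast]; ring
      _ = C * (1 + ‖η‖) ^ (-((N:ℝ) + 1)) := by
          rw [← Real.rpow_add h1y]
          congr 2
          ring

/-- **Local eventual positivity of the fractional/polyharmonic heat equation on ℝ^N.**
If `u₀ ∈ L¹ ∩ L²(ℝ^N)` is real-valued with `∫ u₀ > 0`, then for every compact
`K ⊆ ℝ^N` there is a time `T ≥ 0` after which the solution of
`∂u/∂t + (-Δ)^α u = 0` is strictly positive on `K`. -/
theorem fractional_heat_local_eventual_positivity
    (N : ℕ) (hN : 1 ≤ N) (α : ℝ) (hα : 0 < α)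
    (u₀ : EuclideanSpace ℝ (Fin N) → ℝ)
    (hu₀L1 : Integrable u₀)
    (hu₀L2 : MemLp u₀ 2)
    (hmass : 0 < ∫ x, u₀ x)
    (u0hat : EuclideanSpace ℝ (Fin N) → ℂ)
    (hu0hat : ∀ ω, u0hat ω
      = (((2 * π) ^ (-(N : ℝ) / 2) : ℝ) : ℂ)
        * ∫ x, (u₀ x : ℂ) * Complex.exp (-(Complex.I * ((inner ℝ ω x : ℝ) : ℂ))))
    (u : ℝ → EuclideanSpace ℝ (Fin N) → ℂ)
    (hu : ∀ t, 0 < t → ∀ x, u t x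
      = (((2 * π) ^ (-(N : ℝ) / 2) : ℝ) : ℂ)
        * ∫ ω, (Real.exp (-(t * ‖ω‖ ^ (2 * α))) : ℂ) * u0hat ω
            * Complex.exp (Complex.I * ((inner ℝ ω x : ℝ) : ℂ)))
    (K : Set (EuclideanSpace ℝ (Fin N))) (hK : IsCompact K) :
    ∃ T : ℝ, 0 ≤ T ∧ ∀ t, T ≤ t → ∀ x ∈ K, 0 < (u t x).re := by
  classical
  have hβ : 0 < 2 * α := by linarith
  set β : ℝ := 2 * α with hβ_def
  set c : ℝ := (2 * π) ^ (-(N : ℝ) / 2) with hc_def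
  have hc : 0 < c := Real.rpow_pos_of_pos (by positivity) _
  set A : ℝ := c * ∫ x, u₀ x with hA_def
  have hA : 0 < A := mul_pos hc hmass
  -- helper for real parts
  have ofReal_mul_re : ∀ (a : ℝ) (w : ℂ), ((a:ℂ) * w).re = a * w.re := fun a w => by
    simp [Complex.mul_re]
  -- value of u0hat at 0
  have hhat0 : u0hat 0 = (A : ℂ) := by
    rw [hu0hat 0]
    have h1 : ∀ x0 : (EuclideanSpace ℝ (Fin N)), (u₀ x0 : ℂ) * Complex.exp (-(Complex.I * ((inner ℝ (0:(EuclideanSpace ℝ (Fin N))) x0 : ℝ) : ℂ)))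
        = (u₀ x0 : ℂ) := by
      intro x0
      rw [inner_zero_left]
      simp
    rw [integral_congr_ae (ae_of_all _ h1)]
    have hIC : (∫ a : (EuclideanSpace ℝ (Fin N)), ((u₀ a : ℝ) : ℂ))
        = (((∫ x : (EuclideanSpace ℝ (Fin N)), u₀ x) : ℝ) : ℂ) := integral_ofReal
    rw [hIC, hA_def]
    push_cast
    ring
  -- continuity of u0hat
  have hcont : Continuous u0hat := by
    have heq : u0hat = fun ω : (EuclideanSpace ℝ (Fin N)) => (c : ℂ)
        * ∫ x : (EuclideanSpace ℝ (Fin N)), (u₀ x : ℂ) * Complex.exp (-(Complex.I * ((inner ℝ ω x : ℝ) : ℂ))) :=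
      funext hu0hat
    rw [heq]
    refine continuous_const.mul ?_
    refine continuous_of_dominated (bound := fun x : (EuclideanSpace ℝ (Fin N)) => ‖u₀ x‖) ?_ ?_ hu₀L1.norm ?_
    · intro ω
      refine (Complex.continuous_ofReal.comp_aestronglyMeasurable
        hu₀L1.aestronglyMeasurable).mul (Continuous.aestronglyMeasurable ?_)
      exact Complex.continuous_exp.comp ((continuous_const.mul
        (Complex.continuous_ofReal.comp
          (Continuous.inner continuous_const continuous_id))).neg)
    · intro ω
      refine ae_of_all _ fun x0 => ?_
      rw [norm_mul]
      have h1 : ‖Complex.exp (-(Complex.I * ((inner ℝ ω x0 : ℝ) : ℂ)))‖ = 1 := by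
        rw [Complex.norm_exp]
        simp
      rw [h1, mul_one, Complex.norm_real]
    · refine ae_of_all _ fun x0 => ?_
      exact continuous_const.mul (Complex.continuous_exp.comp ((continuous_const.mul
        (Complex.continuous_ofReal.comp
          (Continuous.inner continuous_id continuous_const))).neg))
  -- uniform bound on u0hat
  set M : ℝ := c * ∫ x : (EuclideanSpace ℝ (Fin N)), ‖u₀ x‖ with hM_def
  have hM : ∀ ω, ‖u0hat ω‖ ≤ M := by
    intro ω
    rw [hu0hat ω, norm_mul, Complex.norm_real, Real.norm_of_nonneg hc.le]
    refine mul_le_mul_of_nonneg_left ?_ hc.le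
    calc ‖∫ x : (EuclideanSpace ℝ (Fin N)), (u₀ x : ℂ) * Complex.exp (-(Complex.I * ((inner ℝ ω x : ℝ) : ℂ)))‖
        ≤ ∫ x : (EuclideanSpace ℝ (Fin N)), ‖(u₀ x : ℂ) * Complex.exp (-(Complex.I * ((inner ℝ ω x : ℝ) : ℂ)))‖ :=
          norm_integral_le_integral_norm _
      _ = ∫ x : (EuclideanSpace ℝ (Fin N)), ‖u₀ x‖ := by
          refine integral_congr_ae (ae_of_all _ fun x0 => ?_)
          show ‖(u₀ x0 : ℂ) * Complex.exp (-(Complex.I * ((inner ℝ ω x0 : ℝ) : ℂ)))‖ = ‖u₀ x0‖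
          rw [norm_mul]
          have h1 : ‖Complex.exp (-(Complex.I * ((inner ℝ ω x0 : ℝ) : ℂ)))‖ = 1 := by
            rw [Complex.norm_exp]
            simp
          rw [h1, mul_one, Complex.norm_real]
  have hM0 : 0 ≤ M := le_trans (norm_nonneg _) (hM 0)
  -- Gaussian-type weight
  have hg_cont : Continuous fun η : (EuclideanSpace ℝ (Fin N)) => Real.exp (-(‖η‖ ^ β)) :=
    Real.continuous_exp.comp ((continuous_norm.rpow_const fun x => Or.inr hβ.le).neg)
  have hg_int : Integrable (fun η : (EuclideanSpace ℝ (Fin N)) => Real.exp (-(‖η‖ ^ β))) := by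
    simpa using myIntegrable N β hβ 0
  have hng_int : Integrable (fun η : (EuclideanSpace ℝ (Fin N)) => ‖η‖ * Real.exp (-(‖η‖ ^ β))) := by
    simpa using myIntegrable N β hβ 1
  set I₀ : ℝ := ∫ η : (EuclideanSpace ℝ (Fin N)), Real.exp (-(‖η‖ ^ β)) with hI₀_def
  set I₁ : ℝ := ∫ η : (EuclideanSpace ℝ (Fin N)), ‖η‖ * Real.exp (-(‖η‖ ^ β)) with hI₁_def
  have hI₀ : 0 < I₀ := by
    rw [hI₀_def]
    refine (integral_pos_iff_support_of_nonneg (fun η => (Real.exp_pos _).le) hg_int).mpr ?_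
    have hsupp : Function.support (fun η : (EuclideanSpace ℝ (Fin N)) => Real.exp (-(‖η‖ ^ β))) = Set.univ := by
      ext η
      simp [Function.mem_support, (Real.exp_pos _).ne']
    rw [hsupp]
    simpa using (isOpen_univ : IsOpen (Set.univ : Set (EuclideanSpace ℝ (Fin N)))).measure_pos volume ⟨0, trivial⟩
  -- bound on K
  obtain ⟨R₀, hR₀⟩ := (Metric.isBounded_iff_subset_closedBall 0).mp hK.isBounded
  set R : ℝ := max R₀ 0 with hR_def
  have hR0 : 0 ≤ R := le_max_right _ _
  have hRK : ∀ x ∈ K, ‖x‖ ≤ R := by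
    intro x hx
    have := hR₀ hx
    rw [Metric.mem_closedBall, dist_zero_right] at this
    exact le_trans this (le_max_left _ _)
  have hsmul_cont : ∀ r : ℝ, Continuous fun η : (EuclideanSpace ℝ (Fin N)) => r • η :=
    fun r => continuous_const_smul r
  -- threshold
  set ε : ℝ := A * I₀ / 4 with hε_def
  have hε : 0 < ε := by positivity
  have hD : Tendsto (fun s : ℝ => ∫ η : (EuclideanSpace ℝ (Fin N)),
      Real.exp (-(‖η‖ ^ β)) * ‖u0hat (s⁻¹ • η) - u0hat 0‖) atTop (𝓝 0) := by
    have h0 : (0:ℝ) = ∫ η : (EuclideanSpace ℝ (Fin N)), (0:ℝ) := by simp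
    rw [h0]
    refine tendsto_integral_filter_of_dominated_convergence
      (fun η : (EuclideanSpace ℝ (Fin N)) => Real.exp (-(‖η‖ ^ β)) * (2 * M)) ?_ ?_ (hg_int.mul_const (2 * M)) ?_
    · filter_upwards with s
      exact (hg_cont.mul ((hcont.comp (hsmul_cont s⁻¹)).sub
        continuous_const).norm).aestronglyMeasurable
    · filter_upwards with s
      refine ae_of_all _ fun η => ?_
      rw [Real.norm_of_nonneg (mul_nonneg (Real.exp_pos _).le (norm_nonneg _))]
      refine mul_le_mul_of_nonneg_left ?_ (Real.exp_pos _).le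
      calc ‖u0hat (s⁻¹ • η) - u0hat 0‖ ≤ ‖u0hat (s⁻¹ • η)‖ + ‖u0hat 0‖ := norm_sub_le _ _
        _ ≤ 2 * M := by linarith [hM (s⁻¹ • η), hM 0]
    · refine ae_of_all _ fun η => ?_
      have h1 : Tendsto (fun s : ℝ => s⁻¹ • η) atTop (𝓝 (0:(EuclideanSpace ℝ (Fin N)))) := by
        have h0 : Tendsto (fun s : ℝ => s⁻¹) atTop (𝓝 (0:ℝ)) := tendsto_inv_atTop_zero
        simpa using h0.smul_const η
      have hc2 : Continuous fun ξ : (EuclideanSpace ℝ (Fin N)) => ‖u0hat ξ - u0hat 0‖ :=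
        (hcont.sub continuous_const).norm
      have h2 : Tendsto (fun s : ℝ => ‖u0hat (s⁻¹ • η) - u0hat 0‖) atTop (𝓝 0) := by
        have := (hc2.tendsto (0:(EuclideanSpace ℝ (Fin N)))).comp h1
        simpa [Function.comp_def] using this
      simpa using h2.const_mul (Real.exp (-(‖η‖ ^ β)))
  have hD2 : Tendsto (fun s : ℝ => M * R * I₁ * s⁻¹) atTop (𝓝 0) := by
    have h0 : Tendsto (fun s : ℝ => s⁻¹) atTop (𝓝 (0:ℝ)) := tendsto_inv_atTop_zero
    simpa using h0.const_mul (M * R * I₁)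
  have hev : ∀ᶠ s : ℝ in atTop,
      (∫ η : (EuclideanSpace ℝ (Fin N)), Real.exp (-(‖η‖ ^ β)) * ‖u0hat (s⁻¹ • η) - u0hat 0‖) < ε
        ∧ M * R * I₁ * s⁻¹ < ε :=
    (hD.eventually_lt_const hε).and (hD2.eventually_lt_const hε)
  obtain ⟨S₀, hS₀⟩ := eventually_atTop.mp hev
  set S : ℝ := max S₀ 1 with hS_def
  have hS1 : (1:ℝ) ≤ S := le_max_right _ _
  have hS0 : 0 < S := lt_of_lt_of_le one_pos hS1
  refine ⟨S ^ β, Real.rpow_nonneg hS0.le β, ?_⟩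
  intro t ht x hx
  have hT1 : (1:ℝ) ≤ S ^ β := Real.one_le_rpow hS1 hβ.le
  have ht0 : 0 < t := lt_of_lt_of_le one_pos (le_trans hT1 ht)
  set s : ℝ := t ^ β⁻¹ with hs_def
  have hs0 : 0 < s := Real.rpow_pos_of_pos ht0 _
  have hsS : S ≤ s := by
    have h1 : (S ^ β) ^ β⁻¹ ≤ t ^ β⁻¹ :=
      Real.rpow_le_rpow (Real.rpow_nonneg hS0.le β) ht (inv_nonneg.mpr hβ.le)
    have h2 : (S ^ β) ^ β⁻¹ = S := by
      rw [← Real.rpow_mul hS0.le, mul_inv_cancel₀ hβ.ne', Real.rpow_one]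
    rw [hs_def, ← h2]
    exact h1
  have hSs := hS₀ s (le_trans (le_max_left _ _) hsS)
  have hs_pow : s ^ β = t := by
    rw [hs_def, ← Real.rpow_mul ht0.le, inv_mul_cancel₀ hβ.ne', Real.rpow_one]
  -- rescaled integrand
  set G : (EuclideanSpace ℝ (Fin N)) → ℂ := fun η => (Real.exp (-(‖η‖ ^ β)) : ℂ) * u0hat (s⁻¹ • η)
      * Complex.exp (Complex.I * ((inner ℝ (s⁻¹ • η) x : ℝ) : ℂ)) with hG_def
  have hG_cont : Continuous G := by
    rw [hG_def]
    refine ((Complex.continuous_ofReal.comp hg_cont).mul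
      (hcont.comp (hsmul_cont s⁻¹))).mul ?_
    exact Complex.continuous_exp.comp (continuous_const.mul
      (Complex.continuous_ofReal.comp
        (Continuous.inner (hsmul_cont s⁻¹) continuous_const)))
  have hG_norm : ∀ η : (EuclideanSpace ℝ (Fin N)), ‖G η‖ ≤ M * Real.exp (-(‖η‖ ^ β)) := by
    intro η
    rw [hG_def]
    have h1 : ‖Complex.exp (Complex.I * ((inner ℝ (s⁻¹ • η) x : ℝ) : ℂ))‖ = 1 := by
      rw [Complex.norm_exp]
      simp
    rw [norm_mul, norm_mul, h1, mul_one, Complex.norm_real,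
      Real.norm_of_nonneg (Real.exp_pos _).le]
    rw [mul_comm]
    exact mul_le_mul_of_nonneg_right (hM _) (Real.exp_pos _).le
  have hG_int : Integrable G :=
    (hg_int.const_mul M).mono' hG_cont.aestronglyMeasurable (ae_of_all _ hG_norm)
  -- the substitution step
  have hstep : (∫ ω : (EuclideanSpace ℝ (Fin N)), (Real.exp (-(t * ‖ω‖ ^ β)) : ℂ) * u0hat ω
      * Complex.exp (Complex.I * ((inner ℝ ω x : ℝ) : ℂ)))
      = ((s ^ N : ℝ)⁻¹ : ℝ) • ∫ η : (EuclideanSpace ℝ (Fin N)), G η := by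
    have hkey : ∀ ω : (EuclideanSpace ℝ (Fin N)), (Real.exp (-(t * ‖ω‖ ^ β)) : ℂ) * u0hat ω
        * Complex.exp (Complex.I * ((inner ℝ ω x : ℝ) : ℂ)) = G (s • ω) := by
      intro ω
      have h1 : s⁻¹ • (s • ω) = ω := inv_smul_smul₀ hs0.ne' ω
      have h2 : ‖s • ω‖ ^ β = t * ‖ω‖ ^ β := by
        rw [norm_smul, Real.norm_eq_abs, abs_of_pos hs0,
          Real.mul_rpow hs0.le (norm_nonneg ω), hs_pow]
      rw [hG_def]
      simp only
      rw [h1, h2]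
    calc (∫ ω : (EuclideanSpace ℝ (Fin N)), (Real.exp (-(t * ‖ω‖ ^ β)) : ℂ) * u0hat ω
        * Complex.exp (Complex.I * ((inner ℝ ω x : ℝ) : ℂ)))
        = ∫ ω : (EuclideanSpace ℝ (Fin N)), G (s • ω) := integral_congr_ae (ae_of_all _ hkey)
      _ = ((s ^ N : ℝ)⁻¹ : ℝ) • ∫ η : (EuclideanSpace ℝ (Fin N)), G η := by
          have := Measure.integral_comp_smul_of_nonneg (volume : Measure (EuclideanSpace ℝ (Fin N))) G s (hR := hs0.le)
          rwa [finrank_euclideanSpace_fin] at this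
  -- pointwise lower bound for the real part
  have hpt : ∀ η : (EuclideanSpace ℝ (Fin N)),
      A * Real.exp (-(‖η‖ ^ β))
        - Real.exp (-(‖η‖ ^ β)) * ‖u0hat (s⁻¹ • η) - u0hat 0‖
        - (M * R * s⁻¹) * (‖η‖ * Real.exp (-(‖η‖ ^ β))) ≤ (G η).re := by
    intro η
    set θ : ℝ := (inner ℝ (s⁻¹ • η) x : ℝ) with hθ_def
    set w : ℂ := u0hat (s⁻¹ • η) * Complex.exp (Complex.I * (θ : ℂ)) with hw_def
    have hGre : (G η).re = Real.exp (-(‖η‖ ^ β)) * w.re := by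
      rw [hG_def]
      simp only
      rw [mul_assoc]
      exact ofReal_mul_re _ _
    have hθb : |θ| ≤ s⁻¹ * ‖η‖ * R := by
      have h1 : |θ| ≤ ‖s⁻¹ • η‖ * ‖x‖ := abs_real_inner_le_norm _ _
      have h2 : ‖s⁻¹ • η‖ = s⁻¹ * ‖η‖ := by
        rw [norm_smul, Real.norm_eq_abs, abs_of_pos (inv_pos.mpr hs0)]
      calc |θ| ≤ ‖s⁻¹ • η‖ * ‖x‖ := h1
        _ = (s⁻¹ * ‖η‖) * ‖x‖ := by rw [h2]
        _ ≤ (s⁻¹ * ‖η‖) * R := by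
            refine mul_le_mul_of_nonneg_left (hRK x hx) ?_
            positivity
        _ = s⁻¹ * ‖η‖ * R := rfl
    have hwA : ‖w - (A:ℂ)‖ ≤ ‖u0hat (s⁻¹ • η) - u0hat 0‖ + M * (s⁻¹ * ‖η‖ * R) := by
      have hsub : w - (A:ℂ) = (u0hat (s⁻¹ • η) - u0hat 0) * Complex.exp (Complex.I * (θ : ℂ))
          + u0hat 0 * (Complex.exp (Complex.I * (θ : ℂ)) - 1) := by
        rw [hw_def, ← hhat0]
        ring
      have hn1 : ‖Complex.exp (Complex.I * (θ : ℂ))‖ = 1 := by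
        rw [Complex.norm_exp]
        simp
      calc ‖w - (A:ℂ)‖
          ≤ ‖(u0hat (s⁻¹ • η) - u0hat 0) * Complex.exp (Complex.I * (θ : ℂ))‖
            + ‖u0hat 0 * (Complex.exp (Complex.I * (θ : ℂ)) - 1)‖ := by
            rw [hsub]; exact norm_add_le _ _
        _ = ‖u0hat (s⁻¹ • η) - u0hat 0‖ * 1
            + ‖u0hat 0‖ * ‖Complex.exp (Complex.I * (θ : ℂ)) - 1‖ := by
            rw [norm_mul, norm_mul, hn1]
        _ ≤ ‖u0hat (s⁻¹ • η) - u0hat 0‖ + M * (s⁻¹ * ‖η‖ * R) := by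
            have h3 : ‖Complex.exp (Complex.I * (θ : ℂ)) - 1‖ ≤ |θ| := myNormExpSub θ
            have h4 : ‖u0hat 0‖ * ‖Complex.exp (Complex.I * (θ : ℂ)) - 1‖
                ≤ M * (s⁻¹ * ‖η‖ * R) :=
              mul_le_mul (hM 0) (le_trans h3 hθb) (norm_nonneg _) hM0
            linarith
    have hwre : A - (‖u0hat (s⁻¹ • η) - u0hat 0‖ + M * (s⁻¹ * ‖η‖ * R)) ≤ w.re := by
      have h1 : -‖w - (A:ℂ)‖ ≤ (w - (A:ℂ)).re :=
        (abs_le.mp (Complex.abs_re_le_norm _)).1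
      have h2 : (w - (A:ℂ)).re = w.re - A := by simp
      linarith
    calc A * Real.exp (-(‖η‖ ^ β))
          - Real.exp (-(‖η‖ ^ β)) * ‖u0hat (s⁻¹ • η) - u0hat 0‖
          - (M * R * s⁻¹) * (‖η‖ * Real.exp (-(‖η‖ ^ β)))
        = Real.exp (-(‖η‖ ^ β))
            * (A - (‖u0hat (s⁻¹ • η) - u0hat 0‖ + M * (s⁻¹ * ‖η‖ * R))) := by ring
      _ ≤ Real.exp (-(‖η‖ ^ β)) * w.re :=
          mul_le_mul_of_nonneg_left hwre (Real.exp_pos _).le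
      _ = (G η).re := hGre.symm
  -- integrability of the pieces
  have hgh_int : Integrable (fun η : (EuclideanSpace ℝ (Fin N)) =>
      Real.exp (-(‖η‖ ^ β)) * ‖u0hat (s⁻¹ • η) - u0hat 0‖) := by
    refine (hg_int.mul_const (2 * M)).mono'
      ((hg_cont.mul ((hcont.comp (hsmul_cont s⁻¹)).sub
        continuous_const).norm).aestronglyMeasurable) (ae_of_all _ fun η => ?_)
    rw [Real.norm_of_nonneg (mul_nonneg (Real.exp_pos _).le (norm_nonneg _))]
    refine mul_le_mul_of_nonneg_left ?_ (Real.exp_pos _).le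
    calc ‖u0hat (s⁻¹ • η) - u0hat 0‖ ≤ ‖u0hat (s⁻¹ • η)‖ + ‖u0hat 0‖ := norm_sub_le _ _
      _ ≤ 2 * M := by linarith [hM (s⁻¹ • η), hM 0]
  have hint1 : Integrable (fun η : (EuclideanSpace ℝ (Fin N)) =>
      A * Real.exp (-(‖η‖ ^ β))) := hg_int.const_mul A
  have hint3 : Integrable (fun η : (EuclideanSpace ℝ (Fin N)) =>
      (M * R * s⁻¹) * (‖η‖ * Real.exp (-(‖η‖ ^ β)))) := hng_int.const_mul (M * R * s⁻¹)
  have hint12 : Integrable (fun η : (EuclideanSpace ℝ (Fin N)) =>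
      A * Real.exp (-(‖η‖ ^ β))
        - Real.exp (-(‖η‖ ^ β)) * ‖u0hat (s⁻¹ • η) - u0hat 0‖) := hint1.sub hgh_int
  have hlhs_int : Integrable (fun η : (EuclideanSpace ℝ (Fin N)) =>
      A * Real.exp (-(‖η‖ ^ β))
        - Real.exp (-(‖η‖ ^ β)) * ‖u0hat (s⁻¹ • η) - u0hat 0‖
        - (M * R * s⁻¹) * (‖η‖ * Real.exp (-(‖η‖ ^ β)))) := hint12.sub hint3
  have hmono := integral_mono hlhs_int hG_int.re hpt
  simp only [RCLike.re_to_complex] at hmono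
  have hsplit : (∫ η : (EuclideanSpace ℝ (Fin N)),
      (A * Real.exp (-(‖η‖ ^ β))
        - Real.exp (-(‖η‖ ^ β)) * ‖u0hat (s⁻¹ • η) - u0hat 0‖
        - (M * R * s⁻¹) * (‖η‖ * Real.exp (-(‖η‖ ^ β)))))
      = A * I₀ - (∫ η : (EuclideanSpace ℝ (Fin N)), Real.exp (-(‖η‖ ^ β)) * ‖u0hat (s⁻¹ • η) - u0hat 0‖)
        - (M * R * s⁻¹) * I₁ := by
    rw [integral_sub hint12 hint3, integral_sub hint1 hgh_int, integral_const_mul,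
      integral_const_mul, hI₀_def, hI₁_def]
  have hre_eq : (∫ η : (EuclideanSpace ℝ (Fin N)), (G η).re) = (∫ η : (EuclideanSpace ℝ (Fin N)), G η).re := by
    have := integral_re hG_int
    simpa [RCLike.re_to_complex] using this
  have hre_pos : 0 < (∫ η : (EuclideanSpace ℝ (Fin N)), G η).re := by
    rw [← hre_eq]
    have hc1 : M * R * s⁻¹ * I₁ = M * R * I₁ * s⁻¹ := by ring
    have h1 := hSs.1
    have h2 := hSs.2
    have h3 : A * I₀ - (∫ η : (EuclideanSpace ℝ (Fin N)), Real.exp (-(‖η‖ ^ β)) * ‖u0hat (s⁻¹ • η) - u0hat 0‖)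
        - (M * R * s⁻¹) * I₁ > A * I₀ - ε - ε := by
      rw [hc1]
      linarith
    have h4 : A * I₀ - ε - ε = A * I₀ / 2 := by
      rw [hε_def]; ring
    rw [hsplit] at hmono
    have h5 : 0 < A * I₀ / 2 := by positivity
    linarith
  -- final computation
  rw [hu t ht0 x, hstep]
  rw [Complex.real_smul, ← mul_assoc, ← Complex.ofReal_mul, ofReal_mul_re]
  have hcoef : 0 < c * (s ^ N)⁻¹ := by positivity
  exact mul_pos hcoef hre_pos
end

section
/- Let n ≥ 1 be an integer, α ≥ 0 a real number, and let p(x) = Σ_{j=k}^m c_j x^j be a polynomial with integer exponents m ≥ k ≥ 1 and real coefficients satisfying c_m > 0 and c_k > 0. Define f_α(t) = ∫₀^∞ x^α e^{-t x^n} dx and g(t) = ∫₀^∞ e^{-t p(x)} dx for t > 0. Then there exist constants C > 0 and t₀ > 0, depending only on α, n, k and the coefficients of p, such that f_α(t)/g(t) ≤ C t^{1/k − (α+1)/n} for all t ≥ t₀. -/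
open MeasureTheory Real

/-- **Comparison of Laplace-type integrals.**
For `p(x) = Σ_{j=k}^m c_j x^j` with `m ≥ k ≥ 1`, `c_m > 0`, `c_k > 0`,
`f_α(t) = ∫₀^∞ x^α e^{-t xⁿ} dx` and `g(t) = ∫₀^∞ e^{-t p(x)} dx`, there are
`C, t₀ > 0`, depending only on `α, n, k` and the coefficients of `p`, with
`f_α(t)/g(t) ≤ C t^{1/k - (α+1)/n}` for all `t ≥ t₀`. -/
theorem laplace_integral_ratio_bound
    (n : ℕ) (hn : 1 ≤ n) (α : ℝ) (hα : 0 ≤ α)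
    (k m : ℕ) (hk : 1 ≤ k) (hkm : k ≤ m)
    (c : ℕ → ℝ) (hcm : 0 < c m) (hck : 0 < c k)
    (p : ℝ → ℝ) (hp : ∀ x, p x = ∑ j ∈ Finset.Icc k m, c j * x ^ j)
    (f : ℝ → ℝ) (hf : ∀ t, f t = ∫ x in Set.Ioi (0 : ℝ), x ^ α * Real.exp (-(t * x ^ n)))
    (g : ℝ → ℝ) (hg : ∀ t, g t = ∫ x in Set.Ioi (0 : ℝ), Real.exp (-(t * p x))) :
    ∃ C : ℝ, 0 < C ∧ ∃ t₀ : ℝ, 0 < t₀ ∧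
      ∀ t : ℝ, t₀ ≤ t →
        f t / g t ≤ C * t ^ ((1 : ℝ) / k - (α + 1) / n) := by
  have hn' : (0 : ℝ) < n := by positivity
  have hk' : (0 : ℝ) < k := by positivity
  have hα' : (-1 : ℝ) < α := by linarith
  -- the constant B = Σ |c j|
  set B : ℝ := ∑ j ∈ Finset.Icc k m, |c j| with hBdef
  have hkmem : k ∈ Finset.Icc k m := Finset.mem_Icc.mpr ⟨le_refl k, hkm⟩
  have hmmem : m ∈ Finset.Icc k m := Finset.mem_Icc.mpr ⟨hkm, le_refl m⟩
  have hB : 0 < B := by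
    have h1 : |c k| ≤ B :=
      Finset.single_le_sum (fun j _ => abs_nonneg (c j)) hkmem
    have := le_abs_self (c k)
    linarith
  -- continuity of p
  have hpc : Continuous p := by
    have : p = fun x => ∑ j ∈ Finset.Icc k m, c j * x ^ j := funext hp
    rw [this]
    exact continuous_finset_sum _ fun j _ => (continuous_const.mul (continuous_pow j))
  -- lower bound for p at infinity
  set R : ℝ := max 1 (2 * B / c m) with hRdef
  have hR1 : (1 : ℝ) ≤ R := le_max_left _ _
  have hR0 : (0 : ℝ) < R := lt_of_lt_of_le one_pos hR1
  have hpbig : ∀ x : ℝ, R ≤ x → c m / 2 * x ≤ p x := by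
    intro x hx
    have hx1 : (1 : ℝ) ≤ x := le_trans hR1 hx
    have hx0 : (0 : ℝ) < x := lt_of_lt_of_le one_pos hx1
    have hxB : 2 * B / c m ≤ x := le_trans (le_max_right _ _) hx
    have hBle : B ≤ c m / 2 * x := by
      rw [div_le_iff₀ hcm] at hxB
      nlinarith
    have hsplit : p x = c m * x ^ m + ∑ j ∈ (Finset.Icc k m).erase m, c j * x ^ j := by
      rw [hp]
      exact (Finset.add_sum_erase _ _ hmmem).symm
    have htail : -(B * x ^ (m - 1)) ≤ ∑ j ∈ (Finset.Icc k m).erase m, c j * x ^ j := by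
      have h1 : ∀ j ∈ (Finset.Icc k m).erase m, -(|c j| * x ^ (m - 1)) ≤ c j * x ^ j := by
        intro j hj
        have hjm : j ≤ m - 1 := by
          have h2 := Finset.mem_of_mem_erase hj
          have h3 := Finset.ne_of_mem_erase hj
          have h4 := (Finset.mem_Icc.mp h2).2
          omega
        have hxj : x ^ j ≤ x ^ (m - 1) := pow_le_pow_right₀ hx1 hjm
        have h5 : -(|c j|) * x ^ j ≤ c j * x ^ j :=
          mul_le_mul_of_nonneg_right (neg_abs_le _) (pow_nonneg hx0.le j)
        have h6 : |c j| * x ^ j ≤ |c j| * x ^ (m - 1) :=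
          mul_le_mul_of_nonneg_left hxj (abs_nonneg _)
        nlinarith
      have h2 := Finset.sum_le_sum h1
      have h3 : ∑ j ∈ (Finset.Icc k m).erase m, -(|c j| * x ^ (m - 1))
          = -((∑ j ∈ (Finset.Icc k m).erase m, |c j|) * x ^ (m - 1)) := by
        rw [Finset.sum_neg_distrib, Finset.sum_mul]
      have h4 : ∑ j ∈ (Finset.Icc k m).erase m, |c j| ≤ B :=
        Finset.sum_le_sum_of_subset_of_nonneg (Finset.erase_subset _ _)
          (fun j _ _ => abs_nonneg _)
      have h5 : (∑ j ∈ (Finset.Icc k m).erase m, |c j|) * x ^ (m - 1) ≤ B * x ^ (m - 1) :=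
        mul_le_mul_of_nonneg_right h4 (pow_nonneg hx0.le _)
      rw [h3] at h2
      linarith
    have hxm : x ^ m = x ^ (m - 1) * x := by
      rw [← pow_succ]
      congr 1
      omega
    have hxp : (1 : ℝ) ≤ x ^ (m - 1) := one_le_pow₀ hx1
    rw [hsplit, hxm]
    nlinarith [mul_le_mul_of_nonneg_left hBle (le_trans zero_le_one hxp)]
  -- upper bound for p near 0
  have hplow : ∀ x : ℝ, 0 ≤ x → x ≤ 1 → p x ≤ B * x ^ k := by
    intro x hx0 hx1
    rw [hp]
    calc ∑ j ∈ Finset.Icc k m, c j * x ^ j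
        ≤ ∑ j ∈ Finset.Icc k m, |c j| * x ^ k := by
          refine Finset.sum_le_sum fun j hj => ?_
          have hkj : k ≤ j := (Finset.mem_Icc.mp hj).1
          have hxj : x ^ j ≤ x ^ k := pow_le_pow_of_le_one hx0 hx1 hkj
          calc c j * x ^ j ≤ |c j| * x ^ j :=
                mul_le_mul_of_nonneg_right (le_abs_self _) (pow_nonneg hx0 j)
            _ ≤ |c j| * x ^ k := mul_le_mul_of_nonneg_left hxj (abs_nonneg _)
      _ = B * x ^ k := by rw [← Finset.sum_mul]
  -- integrability of the g-integrand
  have hInt : ∀ t : ℝ, 0 < t →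
      IntegrableOn (fun x => Real.exp (-(t * p x))) (Set.Ioi (0 : ℝ)) := by
    intro t ht
    have hcontg : Continuous fun x => Real.exp (-(t * p x)) :=
      Real.continuous_exp.comp ((continuous_const.mul hpc).neg)
    rw [← Set.Ioc_union_Ioi_eq_Ioi hR0.le]
    refine IntegrableOn.union (hcontg.integrableOn_Ioc) ?_
    have hb : 0 < t * (c m / 2) := by positivity
    refine Integrable.mono' (exp_neg_integrableOn_Ioi R hb)
      (hcontg.aestronglyMeasurable.restrict) ?_
    refine (ae_restrict_iff' measurableSet_Ioi).mpr (ae_of_all _ fun x hx => ?_)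
    rw [Real.norm_eq_abs, Real.abs_exp]
    refine Real.exp_le_exp.mpr ?_
    have h1 : t * (c m / 2 * x) ≤ t * p x :=
      mul_le_mul_of_nonneg_left (hpbig x (le_of_lt hx)) ht.le
    have h2 : -(t * (c m / 2)) * x = -(t * (c m / 2 * x)) := by ring
    rw [h2]
    exact neg_le_neg h1
  -- exact value of f
  set K : ℝ := 1 / (n : ℝ) * Real.Gamma ((α + 1) / n) with hKdef
  have hK : 0 < K := by
    have : 0 < Real.Gamma ((α + 1) / n) := Real.Gamma_pos_of_pos (by positivity)
    positivity
  have hfval : ∀ t : ℝ, 0 < t → f t = t ^ (-(α + 1) / (n : ℝ)) * K := by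
    intro t ht
    rw [hf]
    have hcong : ∀ x ∈ Set.Ioi (0 : ℝ),
        x ^ α * Real.exp (-(t * x ^ n)) = x ^ α * Real.exp (-t * x ^ (n : ℝ)) := by
      intro x hx
      rw [Real.rpow_natCast, neg_mul]
    rw [setIntegral_congr_fun measurableSet_Ioi hcong,
      integral_rpow_mul_exp_neg_mul_rpow hn' hα' ht, hKdef]
    ring
  -- lower bound for g
  have hgval : ∀ t : ℝ, 1 ≤ t →
      Real.exp (-B) * t ^ (-(1 : ℝ) / (k : ℝ)) ≤ g t := by
    intro t ht1
    have ht0 : (0 : ℝ) < t := lt_of_lt_of_le one_pos ht1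
    set r : ℝ := t ^ (-(1 : ℝ) / (k : ℝ)) with hrdef
    have hr0 : 0 < r := Real.rpow_pos_of_pos ht0 _
    have hr1 : r ≤ 1 := by
      refine Real.rpow_le_one_of_one_le_of_nonpos ht1 ?_
      have : (0 : ℝ) ≤ 1 / (k : ℝ) := by positivity
      rw [neg_div]
      linarith
    have hrk : r ^ k = t⁻¹ := by
      rw [hrdef, ← Real.rpow_natCast (t ^ (-(1 : ℝ) / (k : ℝ))) k,
        ← Real.rpow_mul ht0.le]
      have : -(1 : ℝ) / (k : ℝ) * (k : ℕ) = -1 := by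
        field_simp
      rw [this, Real.rpow_neg_one]
    have hsub : Set.Ioc (0 : ℝ) r ⊆ Set.Ioi (0 : ℝ) := Set.Ioc_subset_Ioi_self
    have hIg := hInt t ht0
    have step1 : ∫ _x in Set.Ioc (0 : ℝ) r, Real.exp (-B)
        ≤ ∫ x in Set.Ioc (0 : ℝ) r, Real.exp (-(t * p x)) := by
      refine setIntegral_mono_on
        (integrableOn_const measure_Ioc_lt_top.ne)
        (hIg.mono_set hsub) measurableSet_Ioc fun x hx => ?_
      refine Real.exp_le_exp.mpr ?_
      have hx0 : 0 < x := hx.1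
      have hxr : x ≤ r := hx.2
      have h1 : p x ≤ B * x ^ k := hplow x hx0.le (le_trans hxr hr1)
      have h2 : x ^ k ≤ r ^ k := pow_le_pow_left₀ hx0.le hxr k
      have h3 : t * p x ≤ t * (B * r ^ k) := by
        refine mul_le_mul_of_nonneg_left ?_ ht0.le
        calc p x ≤ B * x ^ k := h1
          _ ≤ B * r ^ k := mul_le_mul_of_nonneg_left h2 hB.le
      have h4 : t * (B * r ^ k) = B := by
        rw [hrk]
        field_simp
      linarith
    have step0 : ∫ _x in Set.Ioc (0 : ℝ) r, Real.exp (-B)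
        = Real.exp (-B) * r := by
      rw [setIntegral_const, Real.volume_real_Ioc, smul_eq_mul,
        max_eq_left (by linarith : (0:ℝ) ≤ r - 0)]
      ring
    have step2 : ∫ x in Set.Ioc (0 : ℝ) r, Real.exp (-(t * p x))
        ≤ ∫ x in Set.Ioi (0 : ℝ), Real.exp (-(t * p x)) := by
      refine setIntegral_mono_set hIg (ae_of_all _ fun x => (Real.exp_pos _).le)
        (HasSubset.Subset.eventuallyLE hsub)
    rw [hg]
    rw [step0] at step1
    exact le_trans step1 step2
  -- conclusion
  refine ⟨K * Real.exp B, by positivity, 1, one_pos, fun t ht1 => ?_⟩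
  have ht0 : (0 : ℝ) < t := lt_of_lt_of_le one_pos ht1
  have hfnn : 0 ≤ f t := by
    rw [hf]
    exact setIntegral_nonneg measurableSet_Ioi fun x hx => by
      have hx0 : (0:ℝ) < x := hx
      positivity
  set L : ℝ := Real.exp (-B) * t ^ (-(1 : ℝ) / (k : ℝ)) with hLdef
  have hL : 0 < L := by
    have := Real.rpow_pos_of_pos ht0 (-(1 : ℝ) / (k : ℝ))
    positivity
  have hgL : L ≤ g t := hgval t ht1
  have hstep : f t / g t ≤ f t / L :=
    div_le_div_of_nonneg_left hfnn hL hgL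
  refine le_trans hstep (le_of_eq ?_)
  rw [hfval t ht0, hLdef]
  have e1 : t ^ ((1 : ℝ) / (k : ℝ) - (α + 1) / (n : ℝ))
      = t ^ (-(α + 1) / (n : ℝ)) / t ^ (-(1 : ℝ) / (k : ℝ)) := by
    rw [← Real.rpow_sub ht0]
    congr 1
    ring
  rw [e1, Real.exp_neg]
  have h1 : t ^ (-(α + 1) / (n : ℝ)) ≠ 0 := (Real.rpow_pos_of_pos ht0 _).ne'
  have h2 : t ^ (-(1 : ℝ) / (k : ℝ)) ≠ 0 := (Real.rpow_pos_of_pos ht0 _).ne'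
  have h3 : Real.exp B ≠ 0 := (Real.exp_pos _).ne'
  field_simp
end

section
/- Let α₁ > 0, set β = 2√α₁, and let μ : ℝ → ℝ be a measurable function satisfying α₁ + ω⁴ ≤ μ(ω) ≤ α₁ + β ω² + ω⁴ for all ω ∈ ℝ. For t > 0 define φ_t(ω) = e^{-t μ(ω)} / ∫_ℝ e^{-t μ(η)} dη. Then (φ_t)_{t>0} is an approximate identity as t → ∞ on ℝ: (i) 0 < ∫_ℝ e^{-t μ(η)} dη < ∞ so φ_t is well defined and φ_t(ω) ≥ 0 for all ω; (ii) ∫_ℝ φ_t(ω) dω = 1 for all t > 0; (iii) for every δ > 0, ∫_{|ω| ≥ δ} φ_t(ω) dω → 0 as t → ∞ (indeed ∫_{|ω|≥δ} φ_t(ω) dω ≤ C t^{-1/4} for t large, with C depending on δ and α₁). -/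
open MeasureTheory Filter Real

set_option maxHeartbeats 2000000 in
/-- **The normalised kernels `e^{-tμ(ω)} / ∫ e^{-tμ}` form an approximate identity.**
If the measurable function `μ : ℝ → ℝ` satisfies
`α₁ + ω⁴ ≤ μ(ω) ≤ α₁ + 2√α₁ ω² + ω⁴`, then `φ_t(ω) = e^{-tμ(ω)} / ∫ e^{-tμ(η)} dη`
is well defined, non-negative, has total integral `1`, and for every `δ > 0` the
tail mass `∫_{|ω|≥δ} φ_t` tends to `0` as `t → ∞`, indeed with rate `C t^{-1/4}`. -/
theorem mu_kernels_approximate_identity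
    (α₁ : ℝ) (hα₁ : 0 < α₁) (β : ℝ) (hβ : β = 2 * Real.sqrt α₁)
    (μ : ℝ → ℝ) (hμ_meas : Measurable μ)
    (hμ_lb : ∀ ω : ℝ, α₁ + ω ^ 4 ≤ μ ω)
    (hμ_ub : ∀ ω : ℝ, μ ω ≤ α₁ + β * ω ^ 2 + ω ^ 4)
    (φ : ℝ → ℝ → ℝ)
    (hφ : ∀ t ω, φ t ω = Real.exp (-(t * μ ω)) / ∫ η : ℝ, Real.exp (-(t * μ η))) :
    (∀ t : ℝ, 0 < t →
      Integrable (fun η : ℝ => Real.exp (-(t * μ η))) ∧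
      0 < ∫ η : ℝ, Real.exp (-(t * μ η)) ∧
      ∀ ω : ℝ, 0 ≤ φ t ω) ∧
    (∀ t : ℝ, 0 < t → ∫ ω : ℝ, φ t ω = 1) ∧
    (∀ δ : ℝ, 0 < δ →
      Tendsto (fun t => ∫ ω in {ω : ℝ | δ ≤ |ω|}, φ t ω) atTop (nhds 0) ∧
      ∃ C : ℝ, 0 < C ∧ ∃ t₀ : ℝ, 0 < t₀ ∧
        ∀ t : ℝ, t₀ ≤ t →
          (∫ ω in {ω : ℝ | δ ≤ |ω|}, φ t ω) ≤ C * t ^ (-(1 : ℝ) / 4)) := by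
  have hβ_pos : 0 < β := by
    rw [hβ]; positivity
  -- measurability of the kernel
  have hg_meas : ∀ t : ℝ,
      AEStronglyMeasurable (fun η : ℝ => Real.exp (-(t * μ η))) volume := fun t =>
    (Real.measurable_exp.comp ((measurable_const.mul hμ_meas).neg)).aestronglyMeasurable
  -- integrability
  have hInt : ∀ t : ℝ, 0 < t → Integrable (fun η : ℝ => Real.exp (-(t * μ η))) := by
    intro t ht
    have hb : Integrable (fun η : ℝ =>
        Real.exp (t / 4 - t * α₁) * Real.exp (-t * η ^ 2)) :=
      (integrable_exp_neg_mul_sq ht).const_mul _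
    refine hb.mono (hg_meas t) ?_
    filter_upwards with η
    rw [Real.norm_eq_abs, Real.norm_eq_abs, abs_of_nonneg (Real.exp_nonneg _),
      abs_of_nonneg (by positivity), ← Real.exp_add]
    apply Real.exp_le_exp.mpr
    have h1 : α₁ + η ^ 2 - 1 / 4 ≤ μ η := by
      have := hμ_lb η; nlinarith [sq_nonneg (η ^ 2 - 1 / 2)]
    nlinarith [mul_le_mul_of_nonneg_left h1 ht.le]
  -- positivity of the normalising integral
  have hIpos : ∀ t : ℝ, 0 < t → 0 < ∫ η : ℝ, Real.exp (-(t * μ η)) := by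
    intro t ht
    rw [integral_pos_iff_support_of_nonneg (fun η => (Real.exp_pos _).le) (hInt t ht)]
    have : (Function.support fun η : ℝ => Real.exp (-(t * μ η))) = Set.univ := by
      ext η; simp [Function.support, (Real.exp_pos _).ne']
    rw [this]
    simp
  -- nonnegativity of φ
  have hφ_nonneg : ∀ t : ℝ, 0 < t → ∀ ω, 0 ≤ φ t ω := by
    intro t ht ω
    rw [hφ]
    exact div_nonneg (Real.exp_nonneg _) (hIpos t ht).le
  -- total mass one
  have hmass : ∀ t : ℝ, 0 < t → ∫ ω : ℝ, φ t ω = 1 := by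
    intro t ht
    have : (fun ω : ℝ => φ t ω)
        = fun ω : ℝ => Real.exp (-(t * μ ω)) / ∫ η : ℝ, Real.exp (-(t * μ η)) := by
      funext ω; exact hφ t ω
    rw [this, integral_div, div_self (hIpos t ht).ne']
  -- the tail set is measurable
  have hS : ∀ δ : ℝ, MeasurableSet {ω : ℝ | δ ≤ |ω|} := fun δ =>
    (isClosed_le continuous_const continuous_abs).measurableSet
  -- the tail mass as a quotient of integrals
  have htail_eq : ∀ (δ t : ℝ),
      (∫ ω in {ω : ℝ | δ ≤ |ω|}, φ t ω)
        = (∫ ω in {ω : ℝ | δ ≤ |ω|}, Real.exp (-(t * μ ω)))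
            / ∫ η : ℝ, Real.exp (-(t * μ η)) := by
    intro δ t
    have : (fun ω : ℝ => φ t ω)
        = fun ω : ℝ => Real.exp (-(t * μ ω)) / ∫ η : ℝ, Real.exp (-(t * μ η)) := by
      funext ω; exact hφ t ω
    rw [this, integral_div]
  -- the key quantitative estimate
  have key : ∀ δ : ℝ, 0 < δ → ∀ t : ℝ, max 1 (2 / δ ^ 2) ≤ t →
      (∫ ω in {ω : ℝ | δ ≤ |ω|}, φ t ω)
        ≤ (432 * Real.exp (β + 1) / δ ^ 12) * t ^ (-(1 : ℝ) / 4) := by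
    intro δ hδ t htt
    have ht1 : (1 : ℝ) ≤ t := le_trans (le_max_left _ _) htt
    have ht2 : 2 / δ ^ 2 ≤ t := le_trans (le_max_right _ _) htt
    have ht : 0 < t := lt_of_lt_of_le one_pos ht1
    have hb : 0 < t * δ ^ 2 / 2 := by positivity
    have hb1 : (1 : ℝ) ≤ t * δ ^ 2 / 2 := by
      rw [div_le_iff₀ (by positivity)] at ht2
      linarith
    set S := {ω : ℝ | δ ≤ |ω|} with hSdef
    set I := ∫ η : ℝ, Real.exp (-(t * μ η)) with hIdef
    have hI : 0 < I := hIpos t ht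
    -- numerator bound
    have hNptwise : ∀ ω ∈ S, Real.exp (-(t * μ ω))
        ≤ Real.exp (-(t * α₁ + t * δ ^ 4 / 2)) * Real.exp (-(t * δ ^ 2 / 2) * ω ^ 2) := by
      intro ω hω
      have hδω : δ ≤ |ω| := hω
      have hδ2 : δ ^ 2 ≤ ω ^ 2 := by
        rw [← sq_abs ω]
        exact pow_le_pow_left₀ hδ.le hδω 2
      rw [← Real.exp_add]
      apply Real.exp_le_exp.mpr
      have h1 : α₁ + δ ^ 4 / 2 + (δ ^ 2 / 2) * ω ^ 2 ≤ μ ω := by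
        have := hμ_lb ω
        nlinarith [sq_nonneg (ω ^ 2 - δ ^ 2)]
      nlinarith [mul_le_mul_of_nonneg_left h1 ht.le]
    have hNint2 : Integrable (fun ω : ℝ =>
        Real.exp (-(t * α₁ + t * δ ^ 4 / 2)) * Real.exp (-(t * δ ^ 2 / 2) * ω ^ 2)) :=
      (integrable_exp_neg_mul_sq hb).const_mul _
    have hN1 : (∫ ω in S, Real.exp (-(t * μ ω)))
        ≤ ∫ ω in S, Real.exp (-(t * α₁ + t * δ ^ 4 / 2))
            * Real.exp (-(t * δ ^ 2 / 2) * ω ^ 2) :=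
      setIntegral_mono_on (hInt t ht).integrableOn hNint2.integrableOn (hS δ) hNptwise
    have hN2 : (∫ ω in S, Real.exp (-(t * α₁ + t * δ ^ 4 / 2))
            * Real.exp (-(t * δ ^ 2 / 2) * ω ^ 2))
        ≤ ∫ ω : ℝ, Real.exp (-(t * α₁ + t * δ ^ 4 / 2))
            * Real.exp (-(t * δ ^ 2 / 2) * ω ^ 2) :=
      setIntegral_le_integral hNint2 (Filter.Eventually.of_forall fun ω => by positivity)
    have hgauss : (∫ ω : ℝ, Real.exp (-(t * α₁ + t * δ ^ 4 / 2))
            * Real.exp (-(t * δ ^ 2 / 2) * ω ^ 2))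
        = Real.exp (-(t * α₁ + t * δ ^ 4 / 2)) * Real.sqrt (π / (t * δ ^ 2 / 2)) := by
      rw [MeasureTheory.integral_const_mul, integral_gaussian]
    have hsqrt2 : Real.sqrt (π / (t * δ ^ 2 / 2)) ≤ 2 := by
      have h4 : π / (t * δ ^ 2 / 2) ≤ 4 := by
        have : π ≤ 4 := by linarith [Real.pi_le_four]
        calc π / (t * δ ^ 2 / 2) ≤ π / 1 :=
              div_le_div_of_nonneg_left Real.pi_pos.le one_pos hb1
          _ ≤ 4 := by linarith
      calc Real.sqrt (π / (t * δ ^ 2 / 2)) ≤ Real.sqrt 4 := Real.sqrt_le_sqrt h4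
        _ = 2 := by
            rw [show (4 : ℝ) = 2 ^ 2 by norm_num, Real.sqrt_sq (by norm_num : (0:ℝ) ≤ 2)]
    have hN : (∫ ω in S, Real.exp (-(t * μ ω)))
        ≤ 2 * Real.exp (-(t * α₁ + t * δ ^ 4 / 2)) := by
      calc (∫ ω in S, Real.exp (-(t * μ ω)))
          ≤ Real.exp (-(t * α₁ + t * δ ^ 4 / 2)) * Real.sqrt (π / (t * δ ^ 2 / 2)) := by
            rw [← hgauss]; exact le_trans hN1 hN2
        _ ≤ Real.exp (-(t * α₁ + t * δ ^ 4 / 2)) * 2 :=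
            mul_le_mul_of_nonneg_left hsqrt2 (Real.exp_nonneg _)
        _ = 2 * Real.exp (-(t * α₁ + t * δ ^ 4 / 2)) := by ring
    -- denominator bound
    have hst : 0 < Real.sqrt t := Real.sqrt_pos.mpr ht
    set r : ℝ := (Real.sqrt t)⁻¹ with hrdef
    have hr : 0 < r := inv_pos.mpr hst
    have hr2 : r ^ 2 = t⁻¹ := by
      rw [hrdef, inv_pow, Real.sq_sqrt ht.le]
    have hDptwise : ∀ ω ∈ Set.Ioc (0:ℝ) r,
        Real.exp (-(t * α₁ + β + 1)) ≤ Real.exp (-(t * μ ω)) := by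
      intro ω hω
      apply Real.exp_le_exp.mpr
      have hω2 : ω ^ 2 ≤ t⁻¹ := by
        rw [← hr2]
        exact pow_le_pow_left₀ hω.1.le hω.2 2
      have h1 : t * ω ^ 2 ≤ 1 := by
        rw [← mul_inv_cancel₀ ht.ne']
        exact mul_le_mul_of_nonneg_left hω2 ht.le
      have h2 : t * ω ^ 4 ≤ 1 := by
        have h4 : ω ^ 4 ≤ t⁻¹ * t⁻¹ := by nlinarith [sq_nonneg ω, inv_pos.mpr ht]
        have h5 : t * (t⁻¹ * t⁻¹) = t⁻¹ := by field_simp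
        have h6 : t⁻¹ ≤ 1 := by
          rw [inv_le_one_iff₀]; right; exact ht1
        nlinarith [mul_le_mul_of_nonneg_left h4 ht.le]
      have hA : t * μ ω ≤ t * (α₁ + β * ω ^ 2 + ω ^ 4) :=
        mul_le_mul_of_nonneg_left (hμ_ub ω) ht.le
      have hB : β * (t * ω ^ 2) ≤ β * 1 := mul_le_mul_of_nonneg_left h1 hβ_pos.le
      have hC : t * (α₁ + β * ω ^ 2 + ω ^ 4) = t * α₁ + β * (t * ω ^ 2) + t * ω ^ 4 := by
        ring
      linarith
    have hD1 : Real.exp (-(t * α₁ + β + 1)) * r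
        ≤ ∫ ω in Set.Ioc (0:ℝ) r, Real.exp (-(t * μ ω)) := by
      have hconst : (∫ ω in Set.Ioc (0:ℝ) r, Real.exp (-(t * α₁ + β + 1)))
          = Real.exp (-(t * α₁ + β + 1)) * r := by
        rw [setIntegral_const, measureReal_def, Real.volume_Ioc, smul_eq_mul,
          ENNReal.toReal_ofReal (by linarith : (0:ℝ) ≤ r - 0)]
        ring
      rw [← hconst]
      refine setIntegral_mono_on
        (integrableOn_const measure_Ioc_lt_top.ne)
        (hInt t ht).integrableOn measurableSet_Ioc hDptwise
    have hD2 : (∫ ω in Set.Ioc (0:ℝ) r, Real.exp (-(t * μ ω))) ≤ I :=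
      setIntegral_le_integral (hInt t ht)
        (Filter.Eventually.of_forall fun ω => (Real.exp_pos _).le)
    have hD : Real.exp (-(t * α₁ + β + 1)) * r ≤ I := le_trans hD1 hD2
    have hDpos : 0 < Real.exp (-(t * α₁ + β + 1)) * r := by positivity
    -- combine
    have hratio : (∫ ω in S, φ t ω)
        ≤ (2 * Real.exp (-(t * α₁ + t * δ ^ 4 / 2)))
            / (Real.exp (-(t * α₁ + β + 1)) * r) := by
      rw [htail_eq δ t]
      exact div_le_div₀ (by positivity) hN hDpos hD
    have hsimp : (2 * Real.exp (-(t * α₁ + t * δ ^ 4 / 2)))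
            / (Real.exp (-(t * α₁ + β + 1)) * r)
        = 2 * Real.exp (β + 1) * Real.sqrt t * Real.exp (-(t * δ ^ 4 / 2)) := by
      have hexp : Real.exp (-(t * α₁ + t * δ ^ 4 / 2))
          = Real.exp (-(t * α₁ + β + 1)) * (Real.exp (β + 1) * Real.exp (-(t * δ ^ 4 / 2))) := by
        rw [← Real.exp_add, ← Real.exp_add]
        ring_nf
      rw [hrdef, hexp]
      field_simp [Real.exp_ne_zero, hst.ne']
    -- bound the exponential by a power
    have hx : 0 < t * δ ^ 4 / 2 := by positivity
    have hexp_bound : Real.exp (-(t * δ ^ 4 / 2)) ≤ 216 / (δ ^ 12 * t ^ 3) := by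
      have h1 : (t * δ ^ 4 / 2) ^ 3 / 27 ≤ Real.exp (t * δ ^ 4 / 2) := by
        have h2 : (1 : ℝ) + (t * δ ^ 4 / 2) / 3 ≤ Real.exp ((t * δ ^ 4 / 2) / 3) := by
          linarith [Real.add_one_le_exp ((t * δ ^ 4 / 2) / 3)]
        have h3 : ((t * δ ^ 4 / 2) / 3) ^ 3 ≤ (1 + (t * δ ^ 4 / 2) / 3) ^ 3 := by
          apply pow_le_pow_left₀ (by positivity)
          linarith
        calc (t * δ ^ 4 / 2) ^ 3 / 27 = ((t * δ ^ 4 / 2) / 3) ^ 3 := by ring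
          _ ≤ (1 + (t * δ ^ 4 / 2) / 3) ^ 3 := h3
          _ ≤ (Real.exp ((t * δ ^ 4 / 2) / 3)) ^ 3 :=
              pow_le_pow_left₀ (by positivity) h2 3
          _ = Real.exp (t * δ ^ 4 / 2) := by
              rw [← Real.exp_nat_mul]
              congr 1
              push_cast
              ring
      have h4 : (0:ℝ) < (t * δ ^ 4 / 2) ^ 3 / 27 := by positivity
      rw [Real.exp_neg]
      calc (Real.exp (t * δ ^ 4 / 2))⁻¹ ≤ ((t * δ ^ 4 / 2) ^ 3 / 27)⁻¹ :=
            inv_anti₀ h4 h1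
        _ = 216 / (δ ^ 12 * t ^ 3) := by
            rw [inv_div, div_eq_div_iff (by positivity) (by positivity)]
            ring
    -- power comparison
    have hpow : Real.sqrt t / t ^ 3 ≤ t ^ (-(1 : ℝ) / 4) := by
      have e1 : Real.sqrt t / t ^ 3 = t ^ ((1:ℝ)/2) / t ^ ((3:ℝ)) := by
        rw [Real.sqrt_eq_rpow, ← Real.rpow_natCast t 3]
        norm_num
      rw [e1, ← Real.rpow_sub ht]
      apply Real.rpow_le_rpow_of_exponent_le ht1
      norm_num
    -- finish
    calc (∫ ω in S, φ t ω)
        ≤ 2 * Real.exp (β + 1) * Real.sqrt t * Real.exp (-(t * δ ^ 4 / 2)) := by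
          rw [← hsimp]; exact hratio
      _ ≤ 2 * Real.exp (β + 1) * Real.sqrt t * (216 / (δ ^ 12 * t ^ 3)) := by
          apply mul_le_mul_of_nonneg_left hexp_bound (by positivity)
      _ = (432 * Real.exp (β + 1) / δ ^ 12) * (Real.sqrt t / t ^ 3) := by
          field_simp
          ring
      _ ≤ (432 * Real.exp (β + 1) / δ ^ 12) * t ^ (-(1 : ℝ) / 4) :=
          mul_le_mul_of_nonneg_left hpow (by positivity)
  refine ⟨fun t ht => ⟨hInt t ht, hIpos t ht, hφ_nonneg t ht⟩, hmass, fun δ hδ => ?_⟩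
  have ht₀ : 0 < max 1 (2 / δ ^ 2) := lt_max_of_lt_left one_pos
  constructor
  · apply squeeze_zero' (g := fun t : ℝ => (432 * Real.exp (β + 1) / δ ^ 12)
      * t ^ (-(1 : ℝ) / 4))
    · filter_upwards [eventually_ge_atTop (max 1 (2 / δ ^ 2))] with t htt
      have ht : 0 < t := lt_of_lt_of_le ht₀ htt
      exact setIntegral_nonneg (hS δ) fun ω _ => hφ_nonneg t ht ω
    · filter_upwards [eventually_ge_atTop (max 1 (2 / δ ^ 2))] with t htt
      exact key δ hδ t htt
    · have h0 : Tendsto (fun t : ℝ => t ^ (-(1 : ℝ) / 4)) atTop (nhds 0) := by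
        have : (-(1 : ℝ) / 4) = -(1 / 4 : ℝ) := by norm_num
        rw [this]
        exact tendsto_rpow_neg_atTop (by norm_num)
      have := h0.const_mul (432 * Real.exp (β + 1) / δ ^ 12)
      simpa using this
  · exact ⟨432 * Real.exp (β + 1) / δ ^ 12, by positivity,
      max 1 (2 / δ ^ 2), ht₀, fun t htt => key δ hδ t htt⟩
end
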